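/- arXiv:2602.21446 — 4 statements merged into one kernel-verified Lean document; each statement's English description precedes it below -/
import Mathlib

section
/- Let (X_1,Y_1),…,(X_{n+1},Y_{n+1}) be exchangeable random pairs taking values in 𝒳 × {1,…,K}, let Ŝ : 𝒳 × {1,…,K} → ℝ be a fixed measurable nonconformity score function, and fix α ∈ (0,1). Assume the n+1 scores Ŝ(X_1,Y_1),…,Ŝ(X_{n+1},Y_{n+1}) are almost surely pairwise distinct. Let Q̂_{1−α} be the ⌈(1−α)(n+1)⌉-th smallest value among Ŝ(X_1,Y_1),…,Ŝ(X_n,Y_n) (with Q̂_{1−α} = +∞ if ⌈(1−α)(n+1)⌉ > n), and let Ĉ_α(X_{n+1}) = {y ∈ {1,…,K} : Ŝ(X_{n+1},y) ≤ Q̂_{1−α}}. Then ℙ(Y_{n+1} ∈ Ĉ_α(X_{n+1})) ≤ 1 − α + 1/(n+1). -/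
open MeasureTheory
open scoped ENNReal

/-- The `k`-th smallest value (1-indexed) of a tuple of reals. -/
noncomputable def kthSmallest {n : ℕ} (s : Fin n → ℝ) (k : ℕ) : ℝ :=
  ((List.ofFn s).mergeSort (fun a b => a ≤ b)).getD (k - 1) 0

/-- In a sorted list, at most `j` elements are strictly less than the element at index `j`. -/
lemma sorted_filter_lt_length_le : ∀ (L : List ℝ), L.Pairwise (· ≤ ·) →
    ∀ j : ℕ, j < L.length → (L.filter (fun x => decide (x < L.getD j 0))).length ≤ j := by
  intro L hL
  induction L with
  | nil => intro j hj; simp at hj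
  | cons a l ih =>
    intro j hj
    cases j with
    | zero =>
      have : (a :: l).filter (fun x => decide (x < (a :: l).getD 0 0)) = [] := by
        rw [List.filter_eq_nil_iff]
        intro x hx
        simp only [List.getD_cons_zero, decide_eq_true_eq]
        rcases List.mem_cons.1 hx with h | h
        · simp [h]
        · exact not_lt.2 (List.rel_of_pairwise_cons hL h)
      simp [this]
      exact fun b hb => List.rel_of_pairwise_cons hL hb
    | succ j' =>
      have hlen : j' < l.length := by simpa using hj
      have ih' := ih hL.of_cons j' hlen
      have hg : (a :: l).getD (j' + 1) 0 = l.getD j' 0 := by simp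
      rw [hg, List.filter_cons]
      split
      · simpa using Nat.succ_le_succ ih'
      · exact le_trans ih' (Nat.le_succ _)

/-- Count via list. -/
lemma card_filter_eq_countP {n : ℕ} (v : Fin n → ℝ) (p : ℝ → Prop) [DecidablePred p] :
    (Finset.univ.filter (fun j => p (v j))).card = (List.ofFn v).countP (fun x => decide (p x)) := by
  induction n with
  | zero => simp
  | succ m ih =>
    rw [List.ofFn_succ, List.countP_cons]
    rw [Finset.card_filter, Fin.sum_univ_succ, ← Finset.card_filter, ih (fun i => v i.succ)]
    by_cases h : p (v 0) <;> simp [h, Nat.add_comm]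

lemma card_filter_lt_kthSmallest {m k : ℕ} (v : Fin m → ℝ) (hk1 : 1 ≤ k) (hkm : k ≤ m)
    {t : ℝ} (ht : t ≤ kthSmallest v k) :
    (Finset.univ.filter (fun j => v j < t)).card ≤ k - 1 := by
  set L := (List.ofFn v).mergeSort (fun a b => a ≤ b) with hLdef
  have hlen : L.length = m := by
    rw [hLdef, List.length_mergeSort, List.length_ofFn]
  have hsorted : L.Pairwise (· ≤ ·) := by
    have := List.pairwise_mergeSort (le := fun a b : ℝ => decide (a ≤ b))
      (by intro a b c; simpa using le_trans) (by intro a b; simpa using le_total a b)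
      (List.ofFn v)
    simpa using this
  have hk' : k - 1 < L.length := by omega
  have hmain := sorted_filter_lt_length_le L hsorted (k - 1) hk'
  have hcount : (Finset.univ.filter (fun j => v j < t)).card
      = L.countP (fun x => decide (x < t)) := by
    rw [card_filter_eq_countP v (fun x => x < t)]
    exact (List.Perm.countP_eq _ (List.mergeSort_perm (List.ofFn v) _)).symm
  rw [hcount, List.countP_eq_length_filter]
  calc (L.filter (fun x => decide (x < t))).length
      ≤ (L.filter (fun x => decide (x < L.getD (k-1) 0))).length := by
        rw [← List.countP_eq_length_filter, ← List.countP_eq_length_filter]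
        refine List.countP_mono_left fun x _ hx => ?_
        simp only [decide_eq_true_eq] at hx ⊢
        exact lt_of_lt_of_le hx ht
    _ ≤ k - 1 := hmain

/-- Rank of index `i` in the tuple `w`. -/
noncomputable def rk {m : ℕ} (w : Fin m → ℝ) (i : Fin m) : ℕ :=
  (Finset.univ.filter (fun j => w j ≤ w i)).card

lemma rk_eq_sum {m : ℕ} (w : Fin m → ℝ) (i : Fin m) :
    rk w i = ∑ j : Fin m, if w j ≤ w i then 1 else 0 :=
  Finset.card_filter _ _

lemma rk_pos {m : ℕ} (w : Fin m → ℝ) (i : Fin m) : 1 ≤ rk w i :=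
  Finset.card_pos.2 ⟨i, by simp [Finset.mem_filter]⟩

lemma rk_le {m : ℕ} (w : Fin m → ℝ) (i : Fin m) : rk w i ≤ m := by
  simpa [rk] using Finset.card_filter_le Finset.univ (fun j => w j ≤ w i)

lemma rk_strictMonoOn {m : ℕ} {w : Fin m → ℝ}
    {i j : Fin m} (hij : w i < w j) : rk w i < rk w j := by
  apply Finset.card_lt_card
  constructor
  · intro x hx
    simp only [Finset.mem_filter, Finset.mem_univ, true_and] at hx ⊢
    exact le_trans hx (le_of_lt hij)
  · intro hsub
    have : j ∈ Finset.univ.filter (fun x => w x ≤ w i) := hsub (by simp)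
    simp only [Finset.mem_filter, Finset.mem_univ, true_and] at this
    exact absurd hij (not_lt.2 this)

lemma rk_injective {m : ℕ} {w : Fin m → ℝ} (hw : Function.Injective w) :
    Function.Injective (rk w) := by
  intro i j hij
  by_contra hne
  rcases lt_trichotomy (w i) (w j) with h | h | h
  · exact absurd hij (Nat.ne_of_lt (rk_strictMonoOn h))
  · exact hne (hw h)
  · exact absurd hij.symm (Nat.ne_of_lt (rk_strictMonoOn h))

lemma rk_surj {m : ℕ} {w : Fin m → ℝ} (hw : Function.Injective w)
    {r : ℕ} (hr : r ∈ Finset.Icc 1 m) : ∃ i, rk w i = r := by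
  have himg : Finset.univ.image (rk w) = Finset.Icc 1 m := by
    apply Finset.eq_of_subset_of_card_le
    · intro x hx
      simp only [Finset.mem_image, Finset.mem_univ, true_and] at hx
      rcases hx with ⟨i, rfl⟩
      exact Finset.mem_Icc.2 ⟨rk_pos w i, rk_le w i⟩
    · rw [Finset.card_image_of_injective _ (rk_injective hw)]
      simp
  have : r ∈ Finset.univ.image (rk w) := himg ▸ hr
  simpa using this

lemma rk_comp_perm {m : ℕ} (w : Fin m → ℝ) (π : Equiv.Perm (Fin m)) (i : Fin m) :
    rk (w ∘ π) i = rk w (π i) := by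
  unfold rk
  apply Finset.card_bij (fun j _ => π j)
  · intro j hj
    simp only [Finset.mem_filter, Finset.mem_univ, true_and, Function.comp_apply] at hj ⊢
    exact hj
  · intro a _ b _ hab; exact π.injective hab
  · intro b hb
    refine ⟨π.symm b, ?_, by simp⟩
    simp only [Finset.mem_filter, Finset.mem_univ, true_and, Function.comp_apply,
      Equiv.apply_symm_apply] at hb ⊢
    exact hb

lemma rk_last {n : ℕ} (w : Fin (n + 1) → ℝ)
    (hw : ∀ j : Fin (n + 1), j ≠ Fin.last n → w j ≠ w (Fin.last n)) :
    rk w (Fin.last n)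
      = (Finset.univ.filter (fun j : Fin n => w j.castSucc < w (Fin.last n))).card + 1 := by
  unfold rk
  rw [Finset.card_filter, Finset.card_filter, Fin.sum_univ_castSucc]
  simp only [le_refl, if_true]
  congr 1
  apply Finset.sum_congr rfl
  intro j _
  have hne : w j.castSucc ≠ w (Fin.last n) :=
    hw j.castSucc (by simp [Fin.ext_iff, Fin.castSucc, Ne, Fin.val_lt_last]; omega)
  by_cases h : w j.castSucc < w (Fin.last n)
  · simp [h, h.le]
  · have : ¬ w j.castSucc ≤ w (Fin.last n) := fun hle => h (lt_of_le_of_ne hle hne)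
    simp [h, this]

/-- **Split conformal prediction, anti-conservative upper bound (Theorem 3.1).** -/
theorem split_conformal_marginal_coverage_upper
    {Ω : Type*} [MeasurableSpace Ω] (P : Measure Ω) [IsProbabilityMeasure P]
    {𝒳 : Type*} [MeasurableSpace 𝒳] (K : ℕ) (hK : 1 ≤ K) (n : ℕ)
    (X : Fin (n + 1) → Ω → 𝒳) (Y : Fin (n + 1) → Ω → Fin K)
    (hmeas : ∀ i, Measurable (fun ω => (X i ω, Y i ω)))
    (hexch : ∀ π : Equiv.Perm (Fin (n + 1)),
      Measure.map (fun ω => fun i => (X (π i) ω, Y (π i) ω)) P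
        = Measure.map (fun ω => fun i => (X i ω, Y i ω)) P)
    (S : 𝒳 × Fin K → ℝ) (hS : Measurable S)
    (hdistinct : P {ω | ∀ i j : Fin (n + 1), i ≠ j →
      S (X i ω, Y i ω) ≠ S (X j ω, Y j ω)} = 1)
    (α : ℝ) (hα : α ∈ Set.Ioo (0 : ℝ) 1)
    (Qhat : Ω → EReal)
    (hQ : ∀ ω, Qhat ω =
      if ⌈(1 - α) * (n + 1)⌉ ≤ (n : ℤ) then
        ((kthSmallest (fun i : Fin n => S (X i.castSucc ω, Y i.castSucc ω))
            (⌈(1 - α) * (n + 1)⌉.toNat) : ℝ) : EReal)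
      else ⊤)
    (C : Ω → Set (Fin K))
    (hC : ∀ ω, C ω = {y : Fin K | (S (X (Fin.last n) ω, y) : EReal) ≤ Qhat ω}) :
    P {ω | Y (Fin.last n) ω ∈ C ω} ≤ ENNReal.ofReal (1 - α + 1 / (n + 1)) := by
  obtain ⟨hα0, hα1⟩ := hα
  -- scores
  set s : Fin (n + 1) → Ω → ℝ := fun i ω => S (X i ω, Y i ω) with hs_def
  have hs_meas : ∀ i, Measurable (s i) := fun i => hS.comp (hmeas i)
  -- joint random vector
  set V : Ω → (Fin (n + 1) → 𝒳 × Fin K) := fun ω i => (X i ω, Y i ω) with hV_def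
  have hV_meas : Measurable V := measurable_pi_lambda _ hmeas
  -- rank sets in path space
  set B : Fin (n + 1) → ℕ → Set (Fin (n + 1) → 𝒳 × Fin K) :=
    fun i r => {v | rk (fun j => S (v j)) i = r} with hB_def
  have hB_meas : ∀ i r, MeasurableSet (B i r) := by
    intro i r
    have hg : Measurable (fun v : Fin (n + 1) → 𝒳 × Fin K => rk (fun j => S (v j)) i) := by
      simp only [rk_eq_sum]
      apply Finset.measurable_sum
      intro j _
      exact Measurable.ite
        (measurableSet_le (hS.comp (measurable_pi_apply j)) (hS.comp (measurable_pi_apply i)))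
        measurable_const measurable_const
    exact hg (MeasurableSet.singleton r)
  set A : Fin (n + 1) → ℕ → Set Ω := fun i r => V ⁻¹' (B i r) with hA_def
  have hA_meas : ∀ i r, MeasurableSet (A i r) := fun i r => hV_meas (hB_meas i r)
  have hA_mem : ∀ i r ω, ω ∈ A i r ↔ rk (fun j => s j ω) i = r := by
    intro i r ω; rfl
  -- exchangeability: all indices have the same rank distribution
  have hswap : ∀ i r, P (A i r) = P (A (Fin.last n) r) := by
    intro i r
    set π : Equiv.Perm (Fin (n + 1)) := Equiv.swap i (Fin.last n) with hπ
    have hVπ_meas : Measurable (fun ω => fun j => (X (π j) ω, Y (π j) ω)) :=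
      measurable_pi_lambda _ (fun j => hmeas (π j))
    have hmaps := congrArg (fun μ : Measure (Fin (n + 1) → 𝒳 × Fin K) => μ (B i r)) (hexch π)
    rw [Measure.map_apply hVπ_meas (hB_meas i r),
      Measure.map_apply hV_meas (hB_meas i r)] at hmaps
    have hpre : (fun ω => fun j => (X (π j) ω, Y (π j) ω)) ⁻¹' (B i r) = A (π i) r := by
      ext ω
      have : (fun j => S ((fun j' => (X (π j') ω, Y (π j') ω)) j))
          = (fun j => S (V ω j)) ∘ π := rfl
      simp only [hA_def, hB_def, Set.mem_preimage, Set.mem_setOf_eq]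
      rw [show (fun j => S (X (π j) ω, Y (π j) ω)) = (fun j => S (V ω j)) ∘ π from rfl,
        rk_comp_perm]
    rw [hpre] at hmaps
    have : π i = Fin.last n := Equiv.swap_apply_left i (Fin.last n)
    rw [this] at hmaps
    exact hmaps.symm
  -- the almost-sure distinctness set
  set D : Set Ω := {ω | ∀ i j : Fin (n + 1), i ≠ j → s i ω ≠ s j ω} with hD_def
  have hD_one : P D = 1 := hdistinct
  have hD_meas : MeasurableSet D := by
    have : D = ⋂ i, ⋂ j, ⋂ (_ : i ≠ j), {ω | s i ω ≠ s j ω} := by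
      ext ω; simp [hD_def]
    rw [this]
    exact MeasurableSet.iInter fun i => MeasurableSet.iInter fun j =>
      MeasurableSet.iInter fun _ => (measurableSet_eq_fun (hs_meas i) (hs_meas j)).compl
  have hDc : P Dᶜ = 0 := by
    rw [measure_compl hD_meas (measure_ne_top P D), hD_one, measure_univ, tsub_self]
  have hDae : ∀ᵐ ω ∂P, ω ∈ D := by
    rw [MeasureTheory.ae_iff]
    exact hDc
  have hinterD : ∀ T : Set Ω, P (T ∩ D) = P T := by
    intro T
    apply measure_congr
    filter_upwards [hDae] with ω hω
    exact eq_iff_iff.2 ⟨fun h => h.1, fun h => ⟨h, hω⟩⟩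
  have hinj : ∀ ω ∈ D, Function.Injective (fun j => s j ω) := by
    intro ω hω i j hij
    by_contra hne
    exact hω i j hne hij
  -- uniform rank distribution
  have hunif : ∀ r ∈ Finset.Icc 1 (n + 1), P (A (Fin.last n) r) = ((n : ℝ≥0∞) + 1)⁻¹ := by
    intro r hr
    have hcover : (⋃ i, A i r ∩ D) = D := by
      apply Set.Subset.antisymm
      · exact Set.iUnion_subset fun i => Set.inter_subset_right
      · intro ω hω
        obtain ⟨i, hi⟩ := rk_surj (hinj ω hω) hr
        exact Set.mem_iUnion.2 ⟨i, (hA_mem i r ω).2 hi, hω⟩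
    have hdisj : Pairwise (Function.onFun Disjoint (fun i => A i r ∩ D)) := by
      intro i₁ i₂ hne
      rw [Function.onFun, Set.disjoint_left]
      rintro ω ⟨h1, hD1⟩ ⟨h2, _⟩
      exact hne (rk_injective (hinj ω hD1)
        (((hA_mem i₁ r ω).1 h1).trans ((hA_mem i₂ r ω).1 h2).symm))
    have hsum : ∑ i : Fin (n + 1), P (A i r ∩ D) = 1 := by
      rw [← tsum_fintype (L := .unconditional _), ← measure_iUnion hdisj (fun i => (hA_meas i r).inter hD_meas),
        hcover, hD_one]
    have hsum' : ∑ i : Fin (n + 1), P (A (Fin.last n) r) = 1 := by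
      rw [← hsum]
      exact Finset.sum_congr rfl fun i _ => by rw [← hswap i r, ← hinterD (A i r)]
    rw [Finset.sum_const, Finset.card_univ, Fintype.card_fin] at hsum'
    have hne1 : ((n : ℝ≥0∞) + 1) ≠ 0 := by simp
    have hne2 : ((n : ℝ≥0∞) + 1) ≠ ⊤ := by simp
    have hmul : ((n : ℝ≥0∞) + 1) * P (A (Fin.last n) r) = 1 := by
      have hc : ((n + 1 : ℕ) : ℝ≥0∞) = (n : ℝ≥0∞) + 1 := by push_cast; ring
      rw [nsmul_eq_mul, hc] at hsum'
      exact hsum'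
    calc P (A (Fin.last n) r)
        = ((n : ℝ≥0∞) + 1)⁻¹ * (((n : ℝ≥0∞) + 1) * P (A (Fin.last n) r)) := by
          rw [← mul_assoc, ENNReal.inv_mul_cancel hne1 hne2, one_mul]
      _ = ((n : ℝ≥0∞) + 1)⁻¹ := by rw [hmul, mul_one]
  -- the threshold index
  set k : ℕ := ⌈(1 - α) * (n + 1)⌉.toNat with hk_def
  have hx_pos : (0 : ℝ) < (1 - α) * (n + 1) := by
    apply mul_pos (by linarith)
    positivity
  have hceil_pos : 1 ≤ ⌈(1 - α) * (n + 1)⌉ := Int.ceil_pos.2 hx_pos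
  have hk1 : 1 ≤ k := by
    rw [hk_def]; omega
  -- coverage event
  set E : Set Ω := {ω | Y (Fin.last n) ω ∈ C ω} with hE_def
  set m' : ℕ := min k (n + 1) with hm'_def
  have hsubset : E ∩ D ⊆ ⋃ r ∈ Finset.Icc 1 m', A (Fin.last n) r := by
    rintro ω ⟨hωE, hωD⟩
    set R : ℕ := rk (fun j => s j ω) (Fin.last n) with hR_def
    have hR1 : 1 ≤ R := rk_pos _ _
    have hRn : R ≤ n + 1 := rk_le _ _
    have hωE' : (s (Fin.last n) ω : EReal) ≤ Qhat ω := by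
      have := hωE
      rw [hE_def, Set.mem_setOf_eq, hC ω, Set.mem_setOf_eq] at this
      exact this
    have hRk : R ≤ k := by
      by_cases hcase : ⌈(1 - α) * (n + 1)⌉ ≤ (n : ℤ)
      · -- quantile is finite
        have hkn : k ≤ n := by rw [hk_def]; omega
        rw [hQ ω, if_pos hcase] at hωE'
        have hle : s (Fin.last n) ω
            ≤ kthSmallest (fun i : Fin n => S (X i.castSucc ω, Y i.castSucc ω)) k := by
          exact_mod_cast hωE'
        have hcard := card_filter_lt_kthSmallest
          (fun i : Fin n => S (X i.castSucc ω, Y i.castSucc ω)) hk1 hkn hle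
        have hw : ∀ j : Fin (n + 1), j ≠ Fin.last n →
            (fun j => s j ω) j ≠ (fun j => s j ω) (Fin.last n) :=
          fun j hj => hωD j (Fin.last n) hj
        have hcard' : (Finset.univ.filter
            (fun j : Fin n => s j.castSucc ω < s (Fin.last n) ω)).card ≤ k - 1 := hcard
        have hsplit : R = (Finset.univ.filter
            (fun j : Fin n => s j.castSucc ω < s (Fin.last n) ω)).card + 1 :=
          rk_last (fun j => s j ω) hw
        omega
      · have : (n : ℤ) + 1 ≤ ⌈(1 - α) * (n + 1)⌉ := by omega
        have : n + 1 ≤ k := by rw [hk_def]; omega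
        omega
    exact Set.mem_biUnion (Finset.mem_Icc.2 ⟨hR1, le_min hRk hRn⟩) ((hA_mem _ R ω).2 rfl)
  -- put everything together
  have hPE : P E = P (E ∩ D) := (hinterD E).symm
  have hbound : P E ≤ (m' : ℝ≥0∞) * ((n : ℝ≥0∞) + 1)⁻¹ := by
    rw [hPE]
    calc P (E ∩ D) ≤ P (⋃ r ∈ Finset.Icc 1 m', A (Fin.last n) r) := measure_mono hsubset
      _ ≤ ∑ r ∈ Finset.Icc 1 m', P (A (Fin.last n) r) := measure_biUnion_finset_le _ _
      _ = ∑ r ∈ Finset.Icc 1 m', ((n : ℝ≥0∞) + 1)⁻¹ := by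
          apply Finset.sum_congr rfl
          intro r hr
          apply hunif
          rw [Finset.mem_Icc] at hr ⊢
          omega
      _ = (m' : ℝ≥0∞) * ((n : ℝ≥0∞) + 1)⁻¹ := by
          rw [Finset.sum_const, Nat.card_Icc, nsmul_eq_mul]
          norm_num
  refine hbound.trans ?_
  -- final numeric estimate
  have hnpos : (0 : ℝ) < (n : ℝ) + 1 := by positivity
  have hlhs : (m' : ℝ≥0∞) * ((n : ℝ≥0∞) + 1)⁻¹ = ENNReal.ofReal ((m' : ℝ) / ((n : ℝ) + 1)) := by
    rw [div_eq_mul_inv, ENNReal.ofReal_mul (by positivity), ENNReal.ofReal_inv_of_pos hnpos,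
      ENNReal.ofReal_natCast, ENNReal.ofReal_add (by positivity) zero_le_one,
      ENNReal.ofReal_natCast, ENNReal.ofReal_one]
  rw [hlhs]
  apply ENNReal.ofReal_le_ofReal
  have hm'k : (m' : ℝ) ≤ (k : ℝ) := by exact_mod_cast min_le_left k (n + 1)
  have hkx : (k : ℝ) ≤ (1 - α) * (n + 1) + 1 := by
    have h0 : (k : ℤ) = ⌈(1 - α) * (n + 1)⌉ := by
      rw [hk_def]
      exact Int.toNat_of_nonneg (by omega)
    have h2 : (⌈(1 - α) * (n + 1)⌉ : ℝ) < (1 - α) * (n + 1) + 1 := Int.ceil_lt_add_one _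
    calc (k : ℝ) = (⌈(1 - α) * (n + 1)⌉ : ℝ) := by exact_mod_cast congrArg (Int.cast : ℤ → ℝ) h0
      _ ≤ (1 - α) * (n + 1) + 1 := h2.le
  calc (m' : ℝ) / ((n : ℝ) + 1) ≤ ((1 - α) * (n + 1) + 1) / ((n : ℝ) + 1) := by
        gcongr
        exact hm'k.trans hkx
      _ = 1 - α + 1 / ((n : ℝ) + 1) := by field_simp
  -- done
end

section
/- Let (X_1,Y_1),…,(X_{n+1},Y_{n+1}) be exchangeable random pairs taking values in 𝒳 × {1,…,K}, let Ŝ : 𝒳 × {1,…,K} → ℝ be a fixed measurable nonconformity score function, and fix α ∈ (0,1). For each class y ∈ {1,…,K} let 𝒟^y = {i ∈ {1,…,n} : Y_i = y}, let Q̂^y_{1−α} be the ⌈(1−α)(1+|𝒟^y|)⌉-th smallest value among the scores {Ŝ(X_i,Y_i) : i ∈ 𝒟^y} (with Q̂^y_{1−α} = +∞ when ⌈(1−α)(1+|𝒟^y|)⌉ > |𝒟^y|), and let Ĉ_α(X_{n+1}) = {y : Ŝ(X_{n+1},y) ≤ Q̂^y_{1−α}}. Then for every y ∈ {1,…,K},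 ℙ(Y_{n+1} ∈ Ĉ_α(X_{n+1}) and Y_{n+1} = y) ≥ (1 − α) · ℙ(Y_{n+1} = y); in particular, if ℙ(Y_{n+1} = y) > 0 then ℙ(Y_{n+1} ∈ Ĉ_α(X_{n+1}) ∣ Y_{n+1} = y) ≥ 1 − α. -/
open MeasureTheory ProbabilityTheory

/-- The `k`-th smallest value (1-indexed) of a list of reals. -/
noncomputable def kthSmallestL (l : List ℝ) (k : ℕ) : ℝ :=
  (l.mergeSort (fun a b => a ≤ b)).getD (k - 1) 0

lemma aux_quantile (l : List ℝ) (k : ℕ) (hk1 : 1 ≤ k) (hkl : k ≤ l.length) (t : ℝ)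
    (h : kthSmallestL l k < t) :
    k ≤ (l.filter (fun r => decide (r < t))).length := by
  set ls := l.mergeSort (fun a b => a ≤ b) with hls
  have hlen : ls.length = l.length := List.length_mergeSort l
  have hsort : List.Pairwise (· ≤ ·) ls := by
    have := List.pairwise_mergeSort (le := fun a b : ℝ => decide (a ≤ b))
      (by intro a b c; simp; exact le_trans)
      (by intro a b; simp; exact le_total a b) l
    refine this.imp ?_
    intro a b hb; simpa using hb
  have hk1' : k - 1 < ls.length := by omega
  have hq : kthSmallestL l k = ls.get ⟨k - 1, hk1'⟩ := List.getD_eq_get ls 0 ⟨k - 1, hk1'⟩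
  have htake : ∀ a ∈ ls.take k, a < t := by
    intro a ha
    rw [List.mem_take_iff_getElem] at ha
    obtain ⟨i, hi, rfl⟩ := ha
    have hik : i ≤ k - 1 := by omega
    have := hsort.rel_get_of_le (a := ⟨i, by omega⟩) (b := ⟨k - 1, hk1'⟩) (by exact hik)
    calc ls[i] = ls.get ⟨i, by omega⟩ := rfl
    _ ≤ ls.get ⟨k-1, hk1'⟩ := this
    _ < t := by rw [← hq]; exact h
  have hfe : (ls.take k).filter (fun r => decide (r < t)) = ls.take k := by
    rw [List.filter_eq_self]; intro a ha; simpa using htake a ha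
  have hsub : ((ls.take k).filter (fun r => decide (r < t))).length
      ≤ (ls.filter (fun r => decide (r < t))).length :=
    ((ls.take_sublist k).filter _).length_le
  have hlt : ((ls.take k).filter (fun r => decide (r < t))).length = k := by
    rw [hfe, List.length_take]; omega
  have hperm : (ls.filter (fun r => decide (r < t))).length
      = (l.filter (fun r => decide (r < t))).length :=
    ((List.mergeSort_perm l _).filter _).length_eq
  omega

lemma aux_count {ι : Type*} [Fintype ι] [DecidableEq ι] (p : ι → Prop) [DecidablePred p]
    (f : ι → ℝ) (k : ℕ)
    (hne : (Finset.univ.filter fun i => p i ∧ k ≤ (Finset.univ.filter fun j => p j ∧ f j < f i).card).Nonempty) :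
    (Finset.univ.filter fun i => p i ∧ k ≤ (Finset.univ.filter fun j => p j ∧ f j < f i).card).card + k
      ≤ (Finset.univ.filter p).card := by
  classical
  set T := Finset.univ.filter fun i => p i ∧ k ≤ (Finset.univ.filter fun j => p j ∧ f j < f i).card with hT
  obtain ⟨i0, hi0, hmin⟩ := T.exists_min_image f hne
  set U := Finset.univ.filter fun j => p j ∧ f j < f i0 with hU
  have hi0' := (Finset.mem_filter.mp hi0).2
  have hkU : k ≤ U.card := hi0'.2
  have hdisj : Disjoint T U := by
    rw [Finset.disjoint_left]
    intro j hjT hjU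
    have h1 := (Finset.mem_filter.mp hjU).2.2
    have h2 := hmin j hjT
    linarith
  have hsub : T ∪ U ⊆ Finset.univ.filter p := by
    intro j hj
    rcases Finset.mem_union.mp hj with hj | hj
    · exact Finset.mem_filter.mpr ⟨Finset.mem_univ j, (Finset.mem_filter.mp hj).2.1⟩
    · exact Finset.mem_filter.mpr ⟨Finset.mem_univ j, (Finset.mem_filter.mp hj).2.1⟩
  calc T.card + k ≤ T.card + U.card := by omega
  _ = (T ∪ U).card := (Finset.card_union_of_disjoint hdisj).symm
  _ ≤ _ := Finset.card_le_card hsub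

lemma aux_perm_count {ι : Type*} [Fintype ι] [DecidableEq ι] (π : Equiv.Perm ι)
    (p : ι → Prop) [DecidablePred p] :
    (Finset.univ.filter fun i => p (π i)).card = (Finset.univ.filter p).card := by
  apply Finset.card_bij (fun a _ => π a)
  · intro a ha; exact Finset.mem_filter.mpr ⟨Finset.mem_univ _, (Finset.mem_filter.mp ha).2⟩
  · intro a _ b _ h; exact π.injective h
  · intro b hb
    exact ⟨π.symm b, Finset.mem_filter.mpr ⟨Finset.mem_univ _, by simpa using (Finset.mem_filter.mp hb).2⟩, by simp⟩

lemma aux_nat_le_meas {Ω : Type*} [MeasurableSpace Ω] {f g : Ω → ℕ}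
    (hf : Measurable f) (hg : Measurable g) : MeasurableSet {ω | f ω ≤ g ω} := by
  have h : {ω | f ω ≤ g ω} = (fun ω => (f ω, g ω)) ⁻¹' {p : ℕ × ℕ | p.1 ≤ p.2} := rfl
  rw [h]
  exact (hf.prodMk hg) ((Set.to_countable _).measurableSet)

lemma aux_len_filter_finRange {n : ℕ} (p : Fin n → Prop) [DecidablePred p] :
    ((List.finRange n).filter (fun i => p i)).length = (Finset.univ.filter p).card := by
  classical
  rw [← List.toFinset_card_of_nodup ((List.nodup_finRange n).filter _)]
  congr 1
  ext i
  simp [List.mem_filter]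

lemma aux_card_meas {Ω : Type*} [MeasurableSpace Ω] {ι : Type*} [Fintype ι]
    (p : ι → Ω → Prop) [∀ i ω, Decidable (p i ω)] (hp : ∀ i, MeasurableSet {ω | p i ω}) :
    Measurable (fun ω => (Finset.univ.filter (fun i => p i ω)).card) := by
  have h : (fun ω => (Finset.univ.filter (fun i => p i ω)).card)
      = fun ω => ∑ i, if p i ω then 1 else 0 := by
    funext ω; rw [Finset.card_filter]
  rw [h]
  exact Finset.measurable_sum _ (fun i _ => Measurable.ite (hp i) measurable_const measurable_const)

/-- **Label-conditional split conformal prediction, coverage lower bound (Theorem 3.2).** -/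
theorem split_conformal_label_conditional_coverage_lower
    {Ω : Type*} [MeasurableSpace Ω] (P : Measure Ω) [IsProbabilityMeasure P]
    {𝒳 : Type*} [MeasurableSpace 𝒳] (K : ℕ) (hK : 1 ≤ K) (n : ℕ)
    (X : Fin (n + 1) → Ω → 𝒳) (Y : Fin (n + 1) → Ω → Fin K)
    (hmeas : ∀ i, Measurable (fun ω => (X i ω, Y i ω)))
    (hexch : ∀ π : Equiv.Perm (Fin (n + 1)),
      Measure.map (fun ω => fun i => (X (π i) ω, Y (π i) ω)) P
        = Measure.map (fun ω => fun i => (X i ω, Y i ω)) P)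
    (S : 𝒳 × Fin K → ℝ) (hS : Measurable S)
    (α : ℝ) (hα : α ∈ Set.Ioo (0 : ℝ) 1)
    -- `D y ω` is the list of calibration indices `i ∈ {1,…,n}` whose label is `y`
    (D : Fin K → Ω → List (Fin n))
    (hD : ∀ y ω, D y ω = (List.finRange n).filter (fun i => Y i.castSucc ω = y))
    -- label-wise calibrated quantiles
    (Qhat : Fin K → Ω → EReal)
    (hQ : ∀ y ω, Qhat y ω =
      if ⌈(1 - α) * (1 + (D y ω).length)⌉ ≤ ((D y ω).length : ℤ) then
        ((kthSmallestL ((D y ω).map (fun i => S (X i.castSucc ω, Y i.castSucc ω)))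
            (⌈(1 - α) * (1 + (D y ω).length)⌉.toNat) : ℝ) : EReal)
      else ⊤)
    (C : Ω → Set (Fin K))
    (hC : ∀ ω, C ω = {y : Fin K | (S (X (Fin.last n) ω, y) : EReal) ≤ Qhat y ω}) :
    ∀ y : Fin K,
      ENNReal.ofReal (1 - α) * P {ω | Y (Fin.last n) ω = y}
          ≤ P {ω | Y (Fin.last n) ω ∈ C ω ∧ Y (Fin.last n) ω = y}
      ∧ (P {ω | Y (Fin.last n) ω = y} ≠ 0 →
          ENNReal.ofReal (1 - α)
            ≤ P[{ω | Y (Fin.last n) ω ∈ C ω} | {ω | Y (Fin.last n) ω = y}]) := by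
  classical
  intro y
  obtain ⟨hα0, hα1⟩ := hα
  set lst := Fin.last n with hlst
  -- basic measurability
  have hYmeas : ∀ i, Measurable (Y i) := fun i => measurable_snd.comp (hmeas i)
  have hsmeas : ∀ i, Measurable (fun ω => S (X i ω, Y i ω)) := fun i => hS.comp (hmeas i)
  have hYset : ∀ i, MeasurableSet {ω | Y i ω = y} :=
    fun i => (hYmeas i) (measurableSet_singleton y)
  -- key quantities
  set cnt : Ω → ℕ := fun ω => (Finset.univ.filter fun j : Fin (n+1) => Y j ω = y).card with hcnt
  set kf : Ω → ℕ := fun ω => (⌈(1 - α) * cnt ω⌉).toNat with hkf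
  set bel : Fin (n+1) → Ω → ℕ := fun i ω =>
    (Finset.univ.filter fun j : Fin (n+1) =>
      Y j ω = y ∧ S (X j ω, Y j ω) < S (X i ω, Y i ω)).card with hbel
  set B : Fin (n+1) → Set Ω := fun i => {ω | Y i ω = y ∧ kf ω ≤ bel i ω} with hB
  have hcntmeas : Measurable cnt := aux_card_meas _ hYset
  have hkfmeas : Measurable kf :=
    (measurable_from_top (f := fun m : ℕ => (⌈(1 - α) * (m:ℝ)⌉).toNat)).comp hcntmeas
  have hbelmeas : ∀ i, Measurable (bel i) := fun i =>
    aux_card_meas _ (fun j => (hYset j).inter (measurableSet_lt (hsmeas j) (hsmeas i)))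
  have hBmeas : ∀ i, MeasurableSet (B i) := fun i =>
    (hYset i).inter (aux_nat_le_meas hkfmeas (hbelmeas i))
  -- the symmetric event on the sample space
  set cntv : (Fin (n+1) → 𝒳 × Fin K) → ℕ :=
    fun v => (Finset.univ.filter fun j => (v j).2 = y).card with hcntv
  set belv : (Fin (n+1) → 𝒳 × Fin K) → ℕ :=
    fun v => (Finset.univ.filter fun j => (v j).2 = y ∧ S (v j) < S (v lst)).card with hbelv
  set Av : Set (Fin (n+1) → 𝒳 × Fin K) :=
    {v | (v lst).2 = y ∧ (⌈(1 - α) * cntv v⌉).toNat ≤ belv v} with hAv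
  have hvj : ∀ j : Fin (n+1), Measurable (fun v : Fin (n+1) → 𝒳 × Fin K => v j) :=
    fun j => measurable_pi_apply j
  have hvYset : ∀ j, MeasurableSet {v : Fin (n+1) → 𝒳 × Fin K | (v j).2 = y} :=
    fun j => (measurable_snd.comp (hvj j)) (measurableSet_singleton y)
  have hcntvmeas : Measurable cntv := aux_card_meas _ hvYset
  have hbelvmeas : Measurable belv := aux_card_meas _ (fun j =>
    (hvYset j).inter (measurableSet_lt (hS.comp (hvj j)) (hS.comp (hvj lst))))
  have hAvmeas : MeasurableSet Av :=
    (hvYset lst).inter (aux_nat_le_meas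
      ((measurable_from_top (f := fun m : ℕ => (⌈(1 - α) * (m:ℝ)⌉).toNat)).comp hcntvmeas) hbelvmeas)
  set Av2 : Set (Fin (n+1) → 𝒳 × Fin K) := {v | (v lst).2 = y} with hAv2
  have hAv2meas : MeasurableSet Av2 := hvYset lst
  set V : Ω → (Fin (n+1) → 𝒳 × Fin K) := fun ω j => (X j ω, Y j ω) with hV
  have hVmeas : Measurable V := measurable_pi_lambda _ hmeas
  -- permuted maps
  have hVπmeas : ∀ π : Equiv.Perm (Fin (n+1)),
      Measurable (fun ω => fun j => (X (π j) ω, Y (π j) ω)) :=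
    fun π => measurable_pi_lambda _ (fun j => hmeas (π j))
  -- preimage identities
  have hABpre : ∀ i : Fin (n+1),
      B i = (fun ω => fun j => (X ((Equiv.swap i lst) j) ω, Y ((Equiv.swap i lst) j) ω)) ⁻¹' Av := by
    intro i
    ext ω
    have h2 : (Finset.univ.filter fun j => Y ((Equiv.swap i lst) j) ω = y).card = cnt ω :=
      aux_perm_count (Equiv.swap i lst) (fun j => Y j ω = y)
    have h3 : (Finset.univ.filter fun j =>
        Y ((Equiv.swap i lst) j) ω = y ∧
          S (X ((Equiv.swap i lst) j) ω, Y ((Equiv.swap i lst) j) ω)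
            < S (X i ω, Y i ω)).card = bel i ω :=
      aux_perm_count (Equiv.swap i lst)
        (fun j => Y j ω = y ∧ S (X j ω, Y j ω) < S (X i ω, Y i ω))
    simp only [hB, hAv, hcntv, hbelv, hkf, Set.mem_setOf_eq, Set.mem_preimage,
      Equiv.swap_apply_right, h2, h3]
  have hB2pre : ∀ i : Fin (n+1),
      {ω | Y i ω = y}
        = (fun ω => fun j => (X ((Equiv.swap i lst) j) ω, Y ((Equiv.swap i lst) j) ω)) ⁻¹' Av2 := by
    intro i
    ext ω
    simp only [hAv2, Set.mem_setOf_eq, Set.mem_preimage, Equiv.swap_apply_right]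
  -- equal probabilities via exchangeability
  have hPB : ∀ i, P (B i) = P (B lst) := by
    intro i
    have hi := hABpre i
    have hl := hABpre lst
    rw [hi, ← Measure.map_apply (hVπmeas _) hAvmeas, hexch (Equiv.swap i lst),
      ← hexch (Equiv.swap lst lst), Measure.map_apply (hVπmeas _) hAvmeas, ← hl]
  have hPY : ∀ i, P {ω | Y i ω = y} = P {ω | Y lst ω = y} := by
    intro i
    have hi := hB2pre i
    have hl := hB2pre lst
    rw [hi, ← Measure.map_apply (hVπmeas _) hAv2meas, hexch (Equiv.swap i lst),
      ← hexch (Equiv.swap lst lst), Measure.map_apply (hVπmeas _) hAv2meas, ← hl]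
  -- pointwise bound
  have hcard_le : ∀ ω, ((Finset.univ.filter fun i => ω ∈ B i).card : ENNReal)
      ≤ ENNReal.ofReal α * cnt ω := by
    intro ω
    set T := Finset.univ.filter fun i => ω ∈ B i with hT
    rcases T.eq_empty_or_nonempty with he | hne
    · rw [he]; simp
    · have hTeq : T = Finset.univ.filter fun i => Y i ω = y ∧ kf ω ≤
          (Finset.univ.filter fun j => Y j ω = y ∧
            S (X j ω, Y j ω) < S (X i ω, Y i ω)).card := by
        rw [hT]; congr 1
      have hcount := aux_count (fun i : Fin (n+1) => Y i ω = y)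
        (fun i => S (X i ω, Y i ω)) (kf ω) (by rw [← hTeq]; exact hne)
      rw [← hTeq] at hcount
      have hk_ge : (1 - α) * cnt ω ≤ (kf ω : ℝ) := by
        have h1 : (0:ℝ) ≤ (1 - α) * cnt ω :=
          mul_nonneg (by linarith) (Nat.cast_nonneg _)
        have h2 : (0:ℤ) ≤ ⌈(1 - α) * (cnt ω : ℝ)⌉ := Int.ceil_nonneg h1
        have h4 : ((kf ω : ℕ) : ℝ) = ((⌈(1 - α) * (cnt ω : ℝ)⌉ : ℤ) : ℝ) := by
          have h5 : ((kf ω : ℕ) : ℤ) = ⌈(1 - α) * (cnt ω : ℝ)⌉ := Int.toNat_of_nonneg h2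
          exact_mod_cast h5
        rw [h4]
        exact Int.le_ceil _
      have hTr : (T.card : ℝ) ≤ α * cnt ω := by
        have h1 : (T.card : ℝ) + kf ω ≤ cnt ω := by exact_mod_cast hcount
        nlinarith
      calc (T.card : ENNReal) = ENNReal.ofReal (T.card : ℝ) := by
            rw [ENNReal.ofReal_natCast]
      _ ≤ ENNReal.ofReal (α * cnt ω) := ENNReal.ofReal_le_ofReal hTr
      _ = ENNReal.ofReal α * ENNReal.ofReal (cnt ω : ℝ) := ENNReal.ofReal_mul hα0.le
      _ = ENNReal.ofReal α * (cnt ω : ENNReal) := by rw [ENNReal.ofReal_natCast]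
  -- integrate
  have hint1 : ∫⁻ ω, ((Finset.univ.filter fun i => ω ∈ B i).card : ENNReal) ∂P
      = ∑ i : Fin (n+1), P (B i) := by
    have heq : ∀ ω, ((Finset.univ.filter fun i => ω ∈ B i).card : ENNReal)
        = ∑ i : Fin (n+1), (B i).indicator (1 : Ω → ENNReal) ω := by
      intro ω
      rw [Finset.card_filter, Nat.cast_sum]
      refine Finset.sum_congr rfl (fun i _ => ?_)
      by_cases h : ω ∈ B i <;> simp [h, Set.indicator_apply]
    have hfs := lintegral_finset_sum (μ := P) Finset.univ
      (f := fun i => (B i).indicator (1 : Ω → ENNReal))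
      (fun i _ => measurable_const.indicator (hBmeas i))
    rw [lintegral_congr heq, hfs]
    exact Finset.sum_congr rfl (fun i _ => lintegral_indicator_one (hBmeas i))
  have hint2 : ∫⁻ ω, (cnt ω : ENNReal) ∂P = ∑ i : Fin (n+1), P {ω | Y i ω = y} := by
    have heq : ∀ ω, ((cnt ω : ℕ) : ENNReal)
        = ∑ i : Fin (n+1), ({ω | Y i ω = y}).indicator (1 : Ω → ENNReal) ω := by
      intro ω
      show ((Finset.univ.filter fun j : Fin (n+1) => Y j ω = y).card : ENNReal) = _
      rw [Finset.card_filter, Nat.cast_sum]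
      refine Finset.sum_congr rfl (fun i _ => ?_)
      by_cases h : Y i ω = y <;> simp [h, Set.indicator_apply]
    have hfs := lintegral_finset_sum (μ := P) Finset.univ
      (f := fun i => ({ω | Y i ω = y}).indicator (1 : Ω → ENNReal))
      (fun i _ => measurable_const.indicator (hYset i))
    rw [lintegral_congr heq, hfs]
    exact Finset.sum_congr rfl (fun i _ => lintegral_indicator_one (hYset i))
  -- P (B lst) ≤ α * P {Y lst = y}
  have hPBbound : P (B lst) ≤ ENNReal.ofReal α * P {ω | Y lst ω = y} := by
    have hsum1 : ∑ i : Fin (n+1), P (B i) = (n+1 : ENNReal) * P (B lst) := by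
      rw [Finset.sum_congr rfl (fun i _ => hPB i), Finset.sum_const]
      simp [mul_comm]
    have hsum2 : ∑ i : Fin (n+1), P {ω | Y i ω = y}
        = (n+1 : ENNReal) * P {ω | Y lst ω = y} := by
      rw [Finset.sum_congr rfl (fun i _ => hPY i), Finset.sum_const]
      simp [mul_comm]
    have hle : (n+1 : ENNReal) * P (B lst)
        ≤ ENNReal.ofReal α * ((n+1 : ENNReal) * P {ω | Y lst ω = y}) := by
      have hcc : Measurable (fun ω => ((cnt ω : ℕ) : ENNReal)) :=
        (measurable_from_top (f := fun m : ℕ => (m : ENNReal))).comp hcntmeas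
      rw [← hsum1, ← hsum2, ← hint1, ← hint2, ← lintegral_const_mul _ hcc]
      exact lintegral_mono hcard_le
    have hne : ((n:ENNReal)+1) ≠ 0 := by simp
    have hnt : ((n:ENNReal)+1) ≠ ⊤ := by simp
    rw [show ENNReal.ofReal α * ((n+1 : ENNReal) * P {ω | Y lst ω = y})
        = (n+1 : ENNReal) * (ENNReal.ofReal α * P {ω | Y lst ω = y}) by ring] at hle
    exact (ENNReal.mul_le_mul_iff_right hne hnt).mp hle
  -- inclusion: non-coverage on {Y lst = y} implies B lst
  have hincl : {ω | Y lst ω = y} \ B lst ⊆ {ω | Y lst ω ∈ C ω ∧ Y lst ω = y} := by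
    intro ω hω
    obtain ⟨hy, hnB⟩ := hω
    simp only [Set.mem_setOf_eq] at hy
    refine ⟨?_, hy⟩
    rw [hC ω]
    simp only [Set.mem_setOf_eq]
    rw [hy]
    by_contra hnc
    apply hnB
    -- show ω ∈ B lst
    set m := (D y ω).length with hm
    -- cnt ω = m + 1
    have hDlen : m = (Finset.univ.filter fun i : Fin n => Y i.castSucc ω = y).card := by
      rw [hm, hD]
      exact aux_len_filter_finRange _
    have hcnts : cnt ω = m + 1 := by
      rw [hcnt]
      simp only []
      rw [Finset.card_filter, Fin.sum_univ_castSucc]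
      rw [if_pos hy, hDlen, Finset.card_filter]
    have hQω := hQ y ω
    by_cases hif : ⌈(1 - α) * (1 + (m : ℝ))⌉ ≤ (m : ℤ)
    · rw [if_pos hif] at hQω
      set k := (⌈(1 - α) * (1 + (m:ℝ))⌉).toNat with hk
      set g : Fin n → ℝ := fun i => S (X i.castSucc ω, Y i.castSucc ω) with hg
      set t : ℝ := S (X lst ω, y) with ht
      have hqlt : kthSmallestL ((D y ω).map g) k < t := by
        by_contra hle
        push_neg at hle
        exact hnc (by rw [hQω]; exact_mod_cast hle)
      have hk1 : 1 ≤ k := by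
        rw [hk]
        have : (0:ℤ) < ⌈(1 - α) * (1 + (m:ℝ))⌉ :=
          Int.ceil_pos.mpr (mul_pos (by linarith) (by positivity))
        omega
      have hkm : k ≤ m := by rw [hk]; exact Int.toNat_le.mpr hif
      have hfl := aux_quantile ((D y ω).map g) k hk1
        (by rw [List.length_map]; exact hkm) t hqlt
      -- translate filter on mapped list
      rw [List.filter_map] at hfl
      rw [List.length_map] at hfl
      -- the filtered list is nodup, lands in the target finset
      set L2 := (D y ω).filter ((fun r => decide (r < t)) ∘ g) with hL2
      have hnd : L2.Nodup := by
        rw [hL2, hD]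
        exact ((List.nodup_finRange n).filter _).filter _
      have hsubF : L2.toFinset ⊆ Finset.univ.filter
          (fun i : Fin n => Y i.castSucc ω = y ∧ g i < t) := by
        intro a ha
        rw [List.mem_toFinset, hL2, List.mem_filter] at ha
        obtain ⟨haD, hagt⟩ := ha
        have h1 : Y a.castSucc ω = y := by
          rw [hD] at haD
          have := (List.mem_filter.mp haD).2
          simpa using this
        refine Finset.mem_filter.mpr ⟨Finset.mem_univ _, h1, ?_⟩
        simpa using hagt
      have hcardF : k ≤ (Finset.univ.filter
          (fun i : Fin n => Y i.castSucc ω = y ∧ g i < t)).card := by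
        calc k ≤ L2.length := hfl
        _ = L2.toFinset.card := (List.toFinset_card_of_nodup hnd).symm
        _ ≤ _ := Finset.card_le_card hsubF
      -- push into Fin (n+1)
      have hbelge : k ≤ bel lst ω := by
        rw [hbel]
        simp only []
        have himg : (Finset.univ.filter
            (fun i : Fin n => Y i.castSucc ω = y ∧ g i < t)).image Fin.castSucc
            ⊆ Finset.univ.filter (fun j : Fin (n+1) =>
              Y j ω = y ∧ S (X j ω, Y j ω) < S (X lst ω, Y lst ω)) := by
          intro a ha
          rw [Finset.mem_image] at ha
          obtain ⟨b, hb, rfl⟩ := ha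
          obtain ⟨-, hb1, hb2⟩ := Finset.mem_filter.mp hb
          refine Finset.mem_filter.mpr ⟨Finset.mem_univ _, hb1, ?_⟩
          rw [hy]
          calc S (X b.castSucc ω, Y b.castSucc ω) = g b := rfl
          _ < t := hb2
        calc k ≤ (Finset.univ.filter
            (fun i : Fin n => Y i.castSucc ω = y ∧ g i < t)).card := hcardF
        _ = ((Finset.univ.filter
            (fun i : Fin n => Y i.castSucc ω = y ∧ g i < t)).image Fin.castSucc).card :=
            (Finset.card_image_of_injective _ (Fin.castSucc_injective n)).symm
        _ ≤ _ := Finset.card_le_card himg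
      have hkfk : kf ω = k := by
        have h0 : kf ω = (⌈(1 - α) * (cnt ω : ℝ)⌉).toNat := rfl
        rw [h0, hcnts, hk]
        congr 2
        push_cast
        ring
      exact ⟨hy, by rw [hkfk]; exact hbelge⟩
    · rw [if_neg hif] at hQω
      exact absurd (hQω ▸ le_top) hnc
  -- main inequality
  have hmain : ENNReal.ofReal (1 - α) * P {ω | Y lst ω = y}
      ≤ P {ω | Y lst ω ∈ C ω ∧ Y lst ω = y} := by
    have hsplit : P {ω | Y lst ω = y}
        ≤ P ({ω | Y lst ω = y} ∩ B lst) + P ({ω | Y lst ω = y} \ B lst) := by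
      calc P {ω | Y lst ω = y}
          ≤ P (({ω | Y lst ω = y} ∩ B lst) ∪ ({ω | Y lst ω = y} \ B lst)) := by
            apply measure_mono
            intro ω hω
            by_cases h : ω ∈ B lst
            · exact Or.inl ⟨hω, h⟩
            · exact Or.inr ⟨hω, h⟩
      _ ≤ _ := measure_union_le _ _
    have h1 : P ({ω | Y lst ω = y} ∩ B lst) ≤ ENNReal.ofReal α * P {ω | Y lst ω = y} :=
      le_trans (measure_mono Set.inter_subset_right) hPBbound
    have h2 : P ({ω | Y lst ω = y} \ B lst) ≤ P {ω | Y lst ω ∈ C ω ∧ Y lst ω = y} :=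
      measure_mono hincl
    have hkey : P {ω | Y lst ω = y}
        ≤ ENNReal.ofReal α * P {ω | Y lst ω = y}
            + P {ω | Y lst ω ∈ C ω ∧ Y lst ω = y} :=
      le_trans hsplit (add_le_add h1 h2)
    have hofr : ENNReal.ofReal (1 - α) = 1 - ENNReal.ofReal α := by
      rw [ENNReal.ofReal_sub 1 hα0.le, ENNReal.ofReal_one]
    rw [hofr, ENNReal.sub_mul (fun _ _ => measure_ne_top P _)]
    rw [one_mul, tsub_le_iff_right]
    rw [add_comm]
    exact hkey
  refine ⟨hmain, fun hne => ?_⟩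
  rw [cond_apply (hYset lst) P]
  have hseteq : {ω | Y lst ω = y} ∩ {ω | Y lst ω ∈ C ω}
      = {ω | Y lst ω ∈ C ω ∧ Y lst ω = y} := by
    ext ω; simp [Set.mem_setOf_eq, and_comm]
  rw [hseteq, ← ENNReal.div_eq_inv_mul]
  rw [ENNReal.le_div_iff_mul_le (Or.inl hne) (Or.inl (measure_ne_top P _))]
  exact hmain
end

section
/- Let (X_1,Y_1),…,(X_{n+1},Y_{n+1}) be exchangeable random pairs taking values in 𝒳 × {1,…,K}, let Ŝ : 𝒳 × {1,…,K} → ℝ be a fixed measurable nonconformity score function, and fix α ∈ (0,1). Assume the scores Ŝ(X_1,Y_1),…,Ŝ(X_{n+1},Y_{n+1}) are almost surely pairwise distinct. With 𝒟^y, Q̂^y_{1−α}, and Ĉ_α(X_{n+1}) defined as in the label-conditional procedure, for every y ∈ {1,…,K} and every integer m ≥ 0 such that ℙ(Y_{n+1} = y and |𝒟^y| = m) > 0, we have ℙ(Y_{n+1} ∈ Ĉ_α(X_{n+1}) ∣ Y_{n+1} = y, |𝒟^y| = m) ≤ 1 − α + 1/(1+m). -/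
open MeasureTheory ProbabilityTheory
open scoped ENNReal

lemma countP_lt_le_of_le_kthSmallestL (l : List ℝ) (k : ℕ) (hk1 : 1 ≤ k)
    (hkl : k ≤ l.length) (t : ℝ) (ht : t ≤ kthSmallestL l k) :
    l.countP (fun a => decide (a < t)) ≤ k - 1 := by
  set l' := l.mergeSort (fun a b => a ≤ b) with hl'
  have hperm : l'.Perm l := List.mergeSort_perm l _
  have hsorted : l'.Pairwise (fun a b : ℝ => a ≤ b) := by
    have h := List.pairwise_mergeSort (le := fun a b : ℝ => decide (a ≤ b))
      (by intro a b c hab hbc; simp only [decide_eq_true_eq] at *; exact le_trans hab hbc)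
      (by intro a b; simpa using le_total a b) l
    simpa using h
  have hlen : l'.length = l.length := hperm.length_eq
  have hk1' : k - 1 < l'.length := by omega
  have htq : t ≤ l'[k-1] := by
    rwa [kthSmallestL, ← hl', List.getD_eq_getElem l' 0 hk1'] at ht
  rw [← hperm.countP_eq]
  have hsplit : l'.countP (fun a => decide (a < t)) =
      (l'.take (k-1)).countP (fun a => decide (a < t))
      + (l'.drop (k-1)).countP (fun a => decide (a < t)) := by
    rw [← List.countP_append, List.take_append_drop]
  rw [hsplit]
  have hdrop : (l'.drop (k-1)).countP (fun a => decide (a < t)) = 0 := by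
    rw [List.countP_eq_zero]
    intro a ha
    simp only [decide_eq_true_eq, not_lt]
    obtain ⟨i, hi, rfl⟩ := List.mem_iff_getElem.mp ha
    have hlt : k - 1 + i < l'.length := by
      have := hi; simp [List.length_drop] at this; omega
    rw [List.getElem_drop]
    have hle : l'[k-1] ≤ l'[k-1+i] := by
      rcases Nat.eq_zero_or_pos i with rfl | hpos
      · simp
      · exact (List.pairwise_iff_getElem.mp hsorted) _ _ _ _ (by omega)
    exact le_trans htq hle
  have htake : (l'.take (k-1)).countP (fun a => decide (a < t)) ≤ k - 1 := by
    calc (l'.take (k-1)).countP _ ≤ (l'.take (k-1)).length := List.countP_le_length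
      _ ≤ k - 1 := by simp [List.length_take]
  omega

lemma card_filter_rank_le {ι : Type*} [DecidableEq ι] (J : Finset ι) (s : ι → ℝ)
    (hs : ∀ i ∈ J, ∀ j ∈ J, i ≠ j → s i ≠ s j) (k : ℕ) :
    (J.filter (fun j => 1 + ((J.erase j).filter (fun i => s i < s j)).card ≤ k)).card ≤ k := by
  set R : ι → ℕ := fun j => 1 + ((J.erase j).filter (fun i => s i < s j)).card with hR
  have hmono : ∀ i ∈ J, ∀ j ∈ J, s i < s j → R i < R j := by
    intro i hi j hj hij
    have hne : i ≠ j := by rintro rfl; exact lt_irrefl _ hij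
    have hiF : i ∈ (J.erase j).filter (fun t => s t < s j) := by
      simp [Finset.mem_filter, Finset.mem_erase, hne, hi, hij]
    have hsub : (J.erase i).filter (fun t => s t < s i) ⊆
        ((J.erase j).filter (fun t => s t < s j)).erase i := by
      intro t ht
      simp only [Finset.mem_filter, Finset.mem_erase] at ht ⊢
      have htj : s t < s j := lt_trans ht.2 hij
      have htne : t ≠ j := by rintro rfl; exact lt_irrefl _ htj
      exact ⟨ht.1.1, ⟨htne, ht.1.2⟩, htj⟩
    have h1 : ((J.erase i).filter (fun t => s t < s i)).card ≤
        (((J.erase j).filter (fun t => s t < s j)).erase i).card := Finset.card_le_card hsub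
    have h2 : (((J.erase j).filter (fun t => s t < s j)).erase i).card <
        ((J.erase j).filter (fun t => s t < s j)).card := Finset.card_erase_lt_of_mem hiF
    simp only [hR]
    omega
  have hinj : Set.InjOn R J := by
    intro i hi j hj hRij
    by_contra hne
    rcases lt_trichotomy (s i) (s j) with h | h | h
    · exact absurd hRij (Nat.ne_of_lt (hmono i hi j hj h))
    · exact hs i hi j hj hne h
    · exact absurd hRij.symm (Nat.ne_of_lt (hmono j hj i hi h))
  have hmaps : ∀ j ∈ J.filter (fun j => R j ≤ k), R j ∈ Finset.Icc 1 k := by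
    intro j hjf
    rw [Finset.mem_filter] at hjf
    exact Finset.mem_Icc.mpr ⟨Nat.le_add_right 1 _, hjf.2⟩
  calc (J.filter (fun j => R j ≤ k)).card ≤ (Finset.Icc 1 k).card :=
        Finset.card_le_card_of_injOn R hmaps
          (hinj.mono (fun x hx => (Finset.mem_filter.mp hx).1))
    _ = k := by rw [Nat.card_Icc]; omega

lemma measurableSet_labdist {β : Type*} [MeasurableSpace β] {n : ℕ}
    (s : β → ℝ) (hs : Measurable s) (lab : β → Prop) (hlab : MeasurableSet {b | lab b})
    (J : Finset (Fin (n+1))) :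
    MeasurableSet {w : Fin (n+1) → β |
      (∀ i, (lab (w i) ↔ i ∈ J)) ∧ ∀ i j, i ≠ j → s (w i) ≠ s (w j)} := by
  have h1 : MeasurableSet {w : Fin (n+1) → β | ∀ i, (lab (w i) ↔ i ∈ J)} := by
    have he : {w : Fin (n+1) → β | ∀ i, (lab (w i) ↔ i ∈ J)}
        = ⋂ i, {w | lab (w i) ↔ i ∈ J} := by ext w; simp
    rw [he]
    refine MeasurableSet.iInter (fun i => ?_)
    by_cases hi : i ∈ J
    · have he2 : {w : Fin (n+1) → β | lab (w i) ↔ i ∈ J} = (fun w => w i) ⁻¹' {b | lab b} := by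
        ext w; simp [hi]
      rw [he2]; exact (measurable_pi_apply i) hlab
    · have he2 : {w : Fin (n+1) → β | lab (w i) ↔ i ∈ J}
          = ((fun w => w i) ⁻¹' {b | lab b})ᶜ := by
        ext w; simp [hi]
      rw [he2]; exact ((measurable_pi_apply i) hlab).compl
  have h2 : MeasurableSet {w : Fin (n+1) → β | ∀ i j, i ≠ j → s (w i) ≠ s (w j)} := by
    have he : {w : Fin (n+1) → β | ∀ i j, i ≠ j → s (w i) ≠ s (w j)}
        = ⋂ (i) (j) (_ : i ≠ j), {w | s (w i) = s (w j)}ᶜ := by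
      ext w; simp [not_imp_not]
    rw [he]
    exact MeasurableSet.iInter fun i => MeasurableSet.iInter fun j =>
      MeasurableSet.iInter fun _ => (measurableSet_eq_fun
        (hs.comp (measurable_pi_apply i)) (hs.comp (measurable_pi_apply j))).compl
  exact h1.inter h2

lemma swap_sum_bound {β : Type*} [MeasurableSpace β] {n : ℕ}
    (μ : Measure (Fin (n+1) → β)) [IsProbabilityMeasure μ]
    (hμinv : ∀ π : Equiv.Perm (Fin (n+1)), μ.map (fun w i => w (π i)) = μ)
    (s : β → ℝ) (hs : Measurable s)
    (lab : β → Prop) (hlab : MeasurableSet {b | lab b})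
    (J : Finset (Fin (n+1))) (hJlast : Fin.last n ∈ J) (k : ℕ)
    (A : Set (Fin (n+1) → β))
    (hA : A = {w | (∀ i, (lab (w i) ↔ i ∈ J)) ∧ ∀ i j, i ≠ j → s (w i) ≠ s (w j)}) :
    (J.card : ℝ≥0∞) * μ (A ∩ {w | 1 + ((J.erase (Fin.last n)).filter
        (fun i => s (w i) < s (w (Fin.last n)))).card ≤ k})
      ≤ (k : ℝ≥0∞) * μ A := by
  classical
  set Cs : Fin (n+1) → Set (Fin (n+1) → β) := fun j =>
    {w | 1 + ((J.erase j).filter (fun i => s (w i) < s (w j))).card ≤ k} with hCdef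
  -- measurability
  have hCm : ∀ j, MeasurableSet (Cs j) := by
    intro j
    have hRm : Measurable (fun w : Fin (n+1) → β =>
        1 + ((J.erase j).filter (fun i => s (w i) < s (w j))).card) := by
      have heq : (fun w : Fin (n+1) → β =>
          1 + ((J.erase j).filter (fun i => s (w i) < s (w j))).card)
          = fun w => 1 + ∑ i ∈ J.erase j, (if s (w i) < s (w j) then 1 else 0) := by
        funext w
        rw [Finset.card_filter]
      rw [heq]
      exact measurable_const.add (Finset.measurable_sum _ (fun i _ =>
        Measurable.ite (measurableSet_lt (hs.comp (measurable_pi_apply i))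
          (hs.comp (measurable_pi_apply j))) measurable_const measurable_const))
    exact hRm measurableSet_Iic
  have hAm : MeasurableSet A := by
    rw [hA]
    have h1 : MeasurableSet {w : Fin (n+1) → β | ∀ i, (lab (w i) ↔ i ∈ J)} := by
      have he : {w : Fin (n+1) → β | ∀ i, (lab (w i) ↔ i ∈ J)}
          = ⋂ i, {w | lab (w i) ↔ i ∈ J} := by ext w; simp
      rw [he]
      refine MeasurableSet.iInter (fun i => ?_)
      by_cases hi : i ∈ J
      · have he2 : {w : Fin (n+1) → β | lab (w i) ↔ i ∈ J} = (fun w => w i) ⁻¹' {b | lab b} := by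
          ext w; simp [hi]
        rw [he2]; exact (measurable_pi_apply i) hlab
      · have he2 : {w : Fin (n+1) → β | lab (w i) ↔ i ∈ J} = ((fun w => w i) ⁻¹' {b | lab b})ᶜ := by
          ext w; simp [hi]
        rw [he2]; exact ((measurable_pi_apply i) hlab).compl
    have h2 : MeasurableSet {w : Fin (n+1) → β | ∀ i j, i ≠ j → s (w i) ≠ s (w j)} := by
      have he : {w : Fin (n+1) → β | ∀ i j, i ≠ j → s (w i) ≠ s (w j)}
          = ⋂ (i) (j) (_ : i ≠ j), {w | s (w i) = s (w j)}ᶜ := by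
        ext w; simp [not_imp_not]
      rw [he]
      exact MeasurableSet.iInter fun i => MeasurableSet.iInter fun j =>
        MeasurableSet.iInter fun _ => (measurableSet_eq_fun
          (hs.comp (measurable_pi_apply i)) (hs.comp (measurable_pi_apply j))).compl
    exact h1.inter h2
  -- Step A: swap invariance
  have hswap : ∀ j ∈ J, μ (A ∩ Cs j) = μ (A ∩ Cs (Fin.last n)) := by
    intro j hj
    set σ : Equiv.Perm (Fin (n+1)) := Equiv.swap (Fin.last n) j with hσ
    have hss : ∀ i, σ (σ i) = i := fun i => Equiv.swap_apply_self _ _ i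
    have hσlast : σ (Fin.last n) = j := Equiv.swap_apply_left _ _
    have hσJ : ∀ i, σ i ∈ J ↔ i ∈ J := by
      intro i
      rcases eq_or_ne i (Fin.last n) with rfl | h1
      · simp [hσ, Equiv.swap_apply_left, hj, hJlast]
      rcases eq_or_ne i j with rfl | h2
      · simp [hσ, Equiv.swap_apply_right, hj, hJlast]
      · rw [hσ, Equiv.swap_apply_of_ne_of_ne h1 h2]
    have hcard : ∀ w : Fin (n+1) → β, ((J.erase (Fin.last n)).filter
        (fun i => s (w (σ i)) < s (w (σ (Fin.last n))))).card
        = ((J.erase j).filter (fun i => s (w i) < s (w j))).card := by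
      intro w
      have himg : ((J.erase (Fin.last n)).filter
          (fun i => s (w (σ i)) < s (w (σ (Fin.last n))))).image σ
          = (J.erase j).filter (fun i => s (w i) < s (w j)) := by
        ext x
        simp only [Finset.mem_image, Finset.mem_filter, Finset.mem_erase, hσlast]
        constructor
        · rintro ⟨a, ⟨⟨ha1, ha2⟩, ha3⟩, rfl⟩
          refine ⟨⟨?_, (hσJ a).mpr ha2⟩, ha3⟩
          intro h
          exact ha1 (σ.injective (h.trans hσlast.symm))
        · rintro ⟨⟨hx1, hx2⟩, hx3⟩
          refine ⟨σ x, ⟨⟨?_, (hσJ x).mpr hx2⟩, ?_⟩, hss x⟩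
          · intro h
            apply hx1
            rw [← hss x, h, hσlast]
          · rw [hss]
            exact hx3
      rw [← himg, Finset.card_image_of_injective _ σ.injective]
    have hT : Measurable (fun w : Fin (n+1) → β => fun i => w (σ i)) :=
      measurable_pi_lambda _ fun i => measurable_pi_apply _
    have hpre : (fun w : Fin (n+1) → β => fun i => w (σ i)) ⁻¹' (A ∩ Cs (Fin.last n))
        = A ∩ Cs j := by
      ext w
      simp only [Set.mem_preimage, Set.mem_inter_iff, hA, hCdef, Set.mem_setOf_eq]
      have h1 : (∀ i, (lab (w (σ i)) ↔ i ∈ J)) ↔ (∀ i, (lab (w i) ↔ i ∈ J)) := by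
        constructor
        · intro H i; have := H (σ i); rwa [hss, hσJ] at this
        · intro H i; rw [H (σ i), hσJ]
      have h2 : (∀ i i', i ≠ i' → s (w (σ i)) ≠ s (w (σ i'))) ↔
          (∀ i i', i ≠ i' → s (w i) ≠ s (w i')) := by
        constructor
        · intro H i i' hne
          have := H (σ i) (σ i') (fun h => hne (σ.injective h))
          rwa [hss, hss] at this
        · intro H i i' hne
          exact H (σ i) (σ i') (fun h => hne (σ.injective h))
      rw [h1, hcard w, h2]
    calc μ (A ∩ Cs j)
        = μ ((fun w : Fin (n+1) → β => fun i => w (σ i)) ⁻¹' (A ∩ Cs (Fin.last n))) := by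
          rw [hpre]
      _ = (μ.map (fun w : Fin (n+1) → β => fun i => w (σ i))) (A ∩ Cs (Fin.last n)) :=
          (Measure.map_apply hT (hAm.inter (hCm _))).symm
      _ = μ (A ∩ Cs (Fin.last n)) := by rw [hμinv σ]
  -- Step B: counting bound
  have hsum : ∑ j ∈ J, μ (A ∩ Cs j) ≤ (k : ℝ≥0∞) * μ A := by
    have hind : ∀ j ∈ J, Measurable ((A ∩ Cs j).indicator (1 : (Fin (n+1) → β) → ℝ≥0∞)) :=
      fun j _ => measurable_one.indicator (hAm.inter (hCm j))
    calc ∑ j ∈ J, μ (A ∩ Cs j)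
        = ∑ j ∈ J, ∫⁻ w, (A ∩ Cs j).indicator 1 w ∂μ :=
          Finset.sum_congr rfl fun j _ => (lintegral_indicator_one (hAm.inter (hCm j))).symm
      _ = ∫⁻ w, ∑ j ∈ J, (A ∩ Cs j).indicator 1 w ∂μ := (lintegral_finset_sum J hind).symm
      _ ≤ ∫⁻ w, A.indicator (fun _ => (k : ℝ≥0∞)) w ∂μ := by
          refine lintegral_mono fun w => ?_
          by_cases hw : w ∈ A
          · rw [Set.indicator_of_mem hw]
            have heq : ∀ j, (A ∩ Cs j).indicator (1 : (Fin (n+1) → β) → ℝ≥0∞) w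
                = if w ∈ Cs j then 1 else 0 := by
              intro j
              by_cases hcj : w ∈ Cs j
              · rw [if_pos hcj, Set.indicator_of_mem (Set.mem_inter hw hcj)]; rfl
              · rw [if_neg hcj, Set.indicator_of_notMem (fun hmem => hcj hmem.2)]
            have hmemiff : ∀ j, w ∈ Cs j ↔
                1 + ((J.erase j).filter (fun i => s (w i) < s (w j))).card ≤ k := by
              intro j; rw [hCdef]; exact Iff.rfl
            calc ∑ j ∈ J, (A ∩ Cs j).indicator (1 : (Fin (n+1) → β) → ℝ≥0∞) w
                = ∑ j ∈ J, if 1 + ((J.erase j).filter (fun i => s (w i) < s (w j))).card ≤ k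
                    then (1:ℝ≥0∞) else 0 := by
                  refine Finset.sum_congr rfl fun j _ => ?_
                  rw [heq j]
                  by_cases hcj : 1 + ((J.erase j).filter (fun i => s (w i) < s (w j))).card ≤ k
                  · rw [if_pos hcj, if_pos ((hmemiff j).mpr hcj)]
                  · rw [if_neg hcj, if_neg (fun h => hcj ((hmemiff j).mp h))]
              _ = ((J.filter (fun j => 1 + ((J.erase j).filter
                    (fun i => s (w i) < s (w j))).card ≤ k)).card : ℝ≥0∞) := by
                  rw [← Finset.sum_filter]; simp
              _ ≤ (k : ℝ≥0∞) := by
                  have hcnt : (J.filter (fun j => 1 + ((J.erase j).filter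
                      (fun i => s (w i) < s (w j))).card ≤ k)).card ≤ k := by
                    rw [hA] at hw
                    exact card_filter_rank_le J (fun i => s (w i))
                      (fun i _ j _ hne => hw.2 i j hne) k
                  exact_mod_cast Nat.cast_le.mpr hcnt
          · rw [Set.indicator_of_notMem hw]
            have hz : ∀ j ∈ J, (A ∩ Cs j).indicator (1 : (Fin (n+1) → β) → ℝ≥0∞) w = 0 :=
              fun j _ => Set.indicator_of_notMem (fun hmem => hw hmem.1) _
            rw [Finset.sum_congr rfl hz]
            simp
      _ = (k : ℝ≥0∞) * μ A := by
          rw [lintegral_indicator hAm]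
          simp [mul_comm]
  calc (J.card : ℝ≥0∞) * μ (A ∩ Cs (Fin.last n))
      = ∑ j ∈ J, μ (A ∩ Cs j) := by
        rw [Finset.sum_congr rfl hswap, Finset.sum_const, nsmul_eq_mul]
    _ ≤ (k : ℝ≥0∞) * μ A := hsum

/-- **Label-conditional split conformal prediction, anti-conservative upper bound
(Theorem 3.2).** -/
theorem split_conformal_label_conditional_coverage_upper
    {Ω : Type*} [MeasurableSpace Ω] (P : Measure Ω) [IsProbabilityMeasure P]
    {𝒳 : Type*} [MeasurableSpace 𝒳] (K : ℕ) (hK : 1 ≤ K) (n : ℕ)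
    (X : Fin (n + 1) → Ω → 𝒳) (Y : Fin (n + 1) → Ω → Fin K)
    (hmeas : ∀ i, Measurable (fun ω => (X i ω, Y i ω)))
    (hexch : ∀ π : Equiv.Perm (Fin (n + 1)),
      Measure.map (fun ω => fun i => (X (π i) ω, Y (π i) ω)) P
        = Measure.map (fun ω => fun i => (X i ω, Y i ω)) P)
    (S : 𝒳 × Fin K → ℝ) (hS : Measurable S)
    (hdistinct : P {ω | ∀ i j : Fin (n + 1), i ≠ j →
      S (X i ω, Y i ω) ≠ S (X j ω, Y j ω)} = 1)
    (α : ℝ) (hα : α ∈ Set.Ioo (0 : ℝ) 1)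
    -- `D y ω` is the list of calibration indices `i ∈ {1,…,n}` whose label is `y`
    (D : Fin K → Ω → List (Fin n))
    (hD : ∀ y ω, D y ω = (List.finRange n).filter (fun i => Y i.castSucc ω = y))
    -- label-wise calibrated quantiles
    (Qhat : Fin K → Ω → EReal)
    (hQ : ∀ y ω, Qhat y ω =
      if ⌈(1 - α) * (1 + (D y ω).length)⌉ ≤ ((D y ω).length : ℤ) then
        ((kthSmallestL ((D y ω).map (fun i => S (X i.castSucc ω, Y i.castSucc ω)))
            (⌈(1 - α) * (1 + (D y ω).length)⌉.toNat) : ℝ) : EReal)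
      else ⊤)
    (C : Ω → Set (Fin K))
    (hC : ∀ ω, C ω = {y : Fin K | (S (X (Fin.last n) ω, y) : EReal) ≤ Qhat y ω}) :
    ∀ (y : Fin K) (m : ℕ),
      P {ω | Y (Fin.last n) ω = y ∧ (D y ω).length = m} ≠ 0 →
      P[{ω | Y (Fin.last n) ω ∈ C ω} | {ω | Y (Fin.last n) ω = y ∧ (D y ω).length = m}]
        ≤ ENNReal.ofReal (1 - α + 1 / (1 + m)) := by
  classical
  intro y m hPB
  obtain ⟨hα0, hα1⟩ := hα
  have hm1 : (0:ℝ) < 1 + (m:ℝ) := by positivity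
  have hinv : (1 / (1 + (m:ℝ))) * (1 + (m:ℝ)) = 1 := by field_simp
  -- joint data map
  set Z : Ω → (Fin (n + 1) → 𝒳 × Fin K) := fun ω i => (X i ω, Y i ω) with hZdef
  have hZ : Measurable Z := measurable_pi_lambda _ hmeas
  set μ : Measure (Fin (n + 1) → 𝒳 × Fin K) := P.map Z with hμdef
  have hμprob : IsProbabilityMeasure μ := Measure.isProbabilityMeasure_map hZ.aemeasurable
  have hμinv : ∀ π : Equiv.Perm (Fin (n + 1)),
      μ.map (fun w i => w (π i)) = μ := by
    intro π
    have hmp : Measurable (fun w : Fin (n+1) → 𝒳 × Fin K => fun i => w (π i)) :=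
      measurable_pi_lambda _ (fun i => measurable_pi_apply (π i))
    rw [hμdef, Measure.map_map hmp hZ]
    exact hexch π
  -- sets on the data space
  set DL : (Fin (n + 1) → 𝒳 × Fin K) → List (Fin n) :=
    fun w => (List.finRange n).filter (fun i => (w i.castSucc).2 = y) with hDLdef
  set Bw : Set (Fin (n + 1) → 𝒳 × Fin K) :=
    {w | (w (Fin.last n)).2 = y ∧ (DL w).length = m} with hBwdef
  set Dist : Set (Fin (n + 1) → 𝒳 × Fin K) :=
    {w | ∀ i j : Fin (n+1), i ≠ j → S (w i) ≠ S (w j)} with hDistdef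
  have hBeq : {ω | Y (Fin.last n) ω = y ∧ (D y ω).length = m} = Z ⁻¹' Bw := by
    ext ω
    simp only [Set.mem_setOf_eq, Set.mem_preimage, hD]
    exact Iff.rfl
  have hlencard : ∀ w : Fin (n + 1) → 𝒳 × Fin K, (DL w).length
      = (Finset.univ.filter (fun i : Fin n => (w i.castSucc).2 = y)).card := fun w => rfl
  have hlabm : MeasurableSet {b : 𝒳 × Fin K | b.2 = y} :=
    measurable_snd (measurableSet_singleton y)
  have hBwm : MeasurableSet Bw := by
    have h1 : MeasurableSet {w : Fin (n+1) → 𝒳 × Fin K | (w (Fin.last n)).2 = y} :=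
      (measurable_pi_apply (Fin.last n)).snd (measurableSet_singleton y)
    have h2 : MeasurableSet {w : Fin (n+1) → 𝒳 × Fin K | (DL w).length = m} := by
      have hm : Measurable (fun w : Fin (n+1) → 𝒳 × Fin K => (DL w).length) := by
        have he : (fun w : Fin (n+1) → 𝒳 × Fin K => (DL w).length)
            = fun w => ∑ i : Fin n, (if (w i.castSucc).2 = y then 1 else 0) := by
          funext w
          rw [hlencard w, Finset.card_filter]
        rw [he]
        exact Finset.measurable_sum _ (fun i _ => Measurable.ite
          ((measurable_pi_apply i.castSucc).snd (measurableSet_singleton y))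
          measurable_const measurable_const)
      exact hm (measurableSet_singleton m)
    exact h1.inter h2
  have hDistm : MeasurableSet Dist := by
    have he : Dist = ⋂ (i) (j) (_ : i ≠ j),
        {w : Fin (n+1) → 𝒳 × Fin K | S (w i) = S (w j)}ᶜ := by
      ext w; simp [hDistdef, not_imp_not]
    rw [he]
    exact MeasurableSet.iInter fun i => MeasurableSet.iInter fun j =>
      MeasurableSet.iInter fun _ => (measurableSet_eq_fun
        (hS.comp (measurable_pi_apply i)) (hS.comp (measurable_pi_apply j))).compl
  have hμDist : μ Dist = 1 := by
    rw [hμdef, Measure.map_apply hZ hDistm]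
    exact hdistinct
  have hPBμ : P {ω | Y (Fin.last n) ω = y ∧ (D y ω).length = m} = μ Bw := by
    rw [hBeq, hμdef, Measure.map_apply hZ hBwm]
  have hBm : MeasurableSet {ω | Y (Fin.last n) ω = y ∧ (D y ω).length = m} := by
    rw [hBeq]; exact hZ hBwm
  by_cases hcase : ⌈(1 - α) * (1 + (m:ℝ))⌉ ≤ (m : ℤ)
  swap
  · -- trivial case: quantile is ⊤, bound exceeds 1
    have hx : (m:ℝ) < (1 - α) * (1 + (m:ℝ)) := Int.lt_ceil.mp (not_le.mp hcase)
    have h1 : (1:ℝ) ≤ 1 - α + 1 / (1 + (m:ℝ)) := by nlinarith [hx, hinv, hm1]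
    rw [cond_apply hBm]
    calc (P {ω | Y (Fin.last n) ω = y ∧ (D y ω).length = m})⁻¹
          * P ({ω | Y (Fin.last n) ω = y ∧ (D y ω).length = m}
              ∩ {ω | Y (Fin.last n) ω ∈ C ω})
        ≤ (P {ω | Y (Fin.last n) ω = y ∧ (D y ω).length = m})⁻¹
          * P {ω | Y (Fin.last n) ω = y ∧ (D y ω).length = m} :=
          mul_le_mul_right (measure_mono Set.inter_subset_left) _
      _ = 1 := ENNReal.inv_mul_cancel hPB (measure_ne_top _ _)
      _ ≤ ENNReal.ofReal (1 - α + 1 / (1 + (m:ℝ))) := by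
          rw [← ENNReal.ofReal_one]
          exact ENNReal.ofReal_le_ofReal h1
  -- main case
  · set k : ℕ := (⌈(1 - α) * (1 + (m:ℝ))⌉).toNat with hkdef
    have hceil_pos : (0:ℤ) < ⌈(1 - α) * (1 + (m:ℝ))⌉ :=
      Int.ceil_pos.mpr (by nlinarith)
    have hk1 : 1 ≤ k := by omega
    have hkm : k ≤ m := by omega
    -- coverage event on the data space
    set Cov : Set (Fin (n + 1) → 𝒳 × Fin K) := {w | (S (w (Fin.last n)) : EReal) ≤
        (if ⌈(1 - α) * (1 + (DL w).length)⌉ ≤ ((DL w).length : ℤ) then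
          ((kthSmallestL ((DL w).map (fun i => S (w i.castSucc)))
            (⌈(1 - α) * (1 + (DL w).length)⌉.toNat) : ℝ) : EReal)
        else ⊤)} with hCovdef
    have hsub : {ω | Y (Fin.last n) ω = y ∧ (D y ω).length = m}
        ∩ {ω | Y (Fin.last n) ω ∈ C ω} ⊆ Z ⁻¹' (Bw ∩ Cov) := by
      rintro ω ⟨⟨hy, hlen⟩, hcov⟩
      have hDLe : D y ω = DL (Z ω) := by rw [hD]
      constructor
      · exact ⟨hy, by rw [← hDLe]; exact hlen⟩
      · simp only [Set.mem_setOf_eq] at hcov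
        rw [hC ω] at hcov
        simp only [Set.mem_setOf_eq] at hcov
        rw [hy, hQ] at hcov
        show (S (Z ω (Fin.last n)) : EReal) ≤ _
        have hz : Z ω (Fin.last n) = (X (Fin.last n) ω, y) := by
          rw [hZdef]; simp [hy]
        rw [hz, ← hDLe]
        exact hcov
    -- per-configuration objects
    set JD : Finset (Fin n) → Finset (Fin (n+1)) :=
      fun 𝒟 => insert (Fin.last n) (𝒟.image Fin.castSucc) with hJDdef
    set AD : Finset (Fin n) → Set (Fin (n + 1) → 𝒳 × Fin K) :=
      fun 𝒟 => {w | (∀ i, ((w i).2 = y ↔ i ∈ JD 𝒟))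
        ∧ ∀ i j, i ≠ j → S (w i) ≠ S (w j)} with hADdef
    set CD : Finset (Fin n) → Set (Fin (n + 1) → 𝒳 × Fin K) :=
      fun 𝒟 => {w | 1 + (((JD 𝒟).erase (Fin.last n)).filter
        (fun i => S (w i) < S (w (Fin.last n)))).card ≤ k} with hCDdef
    have hmemJ : ∀ (𝒟 : Finset (Fin n)) (i : Fin n), i.castSucc ∈ JD 𝒟 ↔ i ∈ 𝒟 := by
      intro 𝒟 i
      simp [hJDdef, Finset.mem_insert, Finset.mem_image,
        (Fin.castSucc_lt_last i).ne, Fin.castSucc_injective n |>.eq_iff]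
    have hlastJ : ∀ 𝒟 : Finset (Fin n), Fin.last n ∈ JD 𝒟 :=
      fun 𝒟 => Finset.mem_insert_self _ _
    have hADm : ∀ 𝒟, MeasurableSet (AD 𝒟) := by
      intro 𝒟
      exact measurableSet_labdist S hS (fun b => b.2 = y) hlabm (JD 𝒟)
    have hJcard : ∀ 𝒟 : Finset (Fin n), 𝒟.card = m → (JD 𝒟).card = m + 1 := by
      intro 𝒟 h
      have hnm : Fin.last n ∉ 𝒟.image Fin.castSucc := by
        simp only [Finset.mem_image, not_exists]
        rintro a ⟨-, ha⟩
        exact (Fin.castSucc_lt_last a).ne ha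
      rw [hJDdef]
      rw [Finset.card_insert_of_notMem hnm,
        Finset.card_image_of_injective _ (Fin.castSucc_injective n), h]
    have hkey : ∀ 𝒟 ∈ Finset.univ.powersetCard m,
        ((m:ℝ≥0∞) + 1) * μ (AD 𝒟 ∩ CD 𝒟) ≤ (k:ℝ≥0∞) * μ (AD 𝒟) := by
      intro 𝒟 h𝒟
      have hcard : 𝒟.card = m := (Finset.mem_powersetCard_univ.mp h𝒟)
      have := swap_sum_bound μ hμinv S hS (fun b => b.2 = y) hlabm (JD 𝒟)
        (hlastJ 𝒟) k (AD 𝒟) rfl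
      rw [hJcard 𝒟 hcard] at this
      calc ((m:ℝ≥0∞) + 1) * μ (AD 𝒟 ∩ CD 𝒟)
          = ((m + 1 : ℕ) : ℝ≥0∞) * μ (AD 𝒟 ∩ CD 𝒟) := by push_cast; ring_nf
        _ ≤ (k:ℝ≥0∞) * μ (AD 𝒟) := this
    -- the partition of Bw ∩ Dist
    have hDfilter : ∀ w ∈ Bw ∩ Dist,
        w ∈ AD (Finset.univ.filter (fun i : Fin n => (w i.castSucc).2 = y))
        ∧ (Finset.univ.filter (fun i : Fin n => (w i.castSucc).2 = y)).card = m := by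
      rintro w ⟨⟨hy1, hlen1⟩, hd⟩
      constructor
      · constructor
        · intro i
          induction i using Fin.lastCases with
          | last => exact iff_of_true hy1 (hlastJ _)
          | cast i =>
            rw [hmemJ]
            simp [Finset.mem_filter]
        · exact hd
      · rw [← hlencard w]; exact hlen1
    have hABD : ∀ 𝒟 : Finset (Fin n), 𝒟.card = m → AD 𝒟 ⊆ Bw ∩ Dist := by
      intro 𝒟 hcard w hw
      obtain ⟨hl, hd⟩ := hw
      refine ⟨⟨(hl (Fin.last n)).mpr (hlastJ 𝒟), ?_⟩, hd⟩
      rw [hlencard w]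
      have : Finset.univ.filter (fun i : Fin n => (w i.castSucc).2 = y) = 𝒟 := by
        ext i
        rw [Finset.mem_filter]
        constructor
        · rintro ⟨-, h⟩
          exact (hmemJ 𝒟 i).mp ((hl i.castSucc).mp h)
        · intro h
          exact ⟨Finset.mem_univ i, (hl i.castSucc).mpr ((hmemJ 𝒟 i).mpr h)⟩
      rw [this, hcard]
    have hparts : Bw ∩ Dist = ⋃ 𝒟 ∈ Finset.univ.powersetCard m (α := Fin n), AD 𝒟 := by
      ext w
      simp only [Set.mem_iUnion, exists_prop]
      constructor
      · intro hw
        obtain ⟨hmem, hcard⟩ := hDfilter w hw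
        exact ⟨_, Finset.mem_powersetCard_univ.mpr hcard, hmem⟩
      · rintro ⟨𝒟, h𝒟, hw⟩
        exact hABD 𝒟 (Finset.mem_powersetCard_univ.mp h𝒟) hw
    have hdisj : (↑(Finset.univ.powersetCard m (α := Fin n)) :
        Set (Finset (Fin n))).PairwiseDisjoint AD := by
      intro 𝒟 h𝒟 𝒟' h𝒟' hne
      refine Set.disjoint_left.mpr (fun w hw hw' => hne ?_)
      ext i
      rw [← hmemJ 𝒟 i, ← hw.1 i.castSucc, hw'.1 i.castSucc, hmemJ 𝒟' i]
    have hsum1 : μ (Bw ∩ Dist) = ∑ 𝒟 ∈ Finset.univ.powersetCard m, μ (AD 𝒟) := by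
      rw [hparts]
      exact measure_biUnion_finset hdisj (fun 𝒟 _ => hADm 𝒟)
    -- inclusion of the coverage event into rank events
    have hnotmem : ∀ 𝒟 : Finset (Fin n), Fin.last n ∉ 𝒟.image Fin.castSucc := by
      intro 𝒟
      simp only [Finset.mem_image, not_exists]
      rintro a ⟨-, ha⟩
      exact (Fin.castSucc_lt_last a).ne ha
    have hsub2 : Bw ∩ Cov ∩ Dist
        ⊆ ⋃ 𝒟 ∈ Finset.univ.powersetCard m (α := Fin n), (AD 𝒟 ∩ CD 𝒟) := by
      rintro w ⟨⟨hwB, hwC⟩, hwD⟩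
      obtain ⟨hmem, hcard⟩ := hDfilter w ⟨hwB, hwD⟩
      set 𝒟 : Finset (Fin n) :=
        Finset.univ.filter (fun i : Fin n => (w i.castSucc).2 = y) with h𝒟def
      simp only [Set.mem_iUnion, exists_prop]
      refine ⟨𝒟, Finset.mem_powersetCard_univ.mpr hcard, hmem, ?_⟩
      obtain ⟨hy1, hlen1⟩ := hwB
      rw [hCovdef, Set.mem_setOf_eq, hlen1] at hwC
      rw [if_pos hcase, ← hkdef] at hwC
      have ht : S (w (Fin.last n))
          ≤ kthSmallestL ((DL w).map (fun i => S (w i.castSucc))) k := by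
        exact_mod_cast hwC
      have hcnt := countP_lt_le_of_le_kthSmallestL
        ((DL w).map (fun i => S (w i.castSucc))) k hk1
        (by rw [List.length_map]; rw [hlen1]; exact hkm) _ ht
      have hbridge : (((JD 𝒟).erase (Fin.last n)).filter
          (fun i => S (w i) < S (w (Fin.last n)))).card
          = ((DL w).map (fun i => S (w i.castSucc))).countP
            (fun a => decide (a < S (w (Fin.last n)))) := by
        have herase : (JD 𝒟).erase (Fin.last n) = 𝒟.image Fin.castSucc := by
          rw [hJDdef]
          exact Finset.erase_insert (hnotmem 𝒟)
        rw [herase, Finset.filter_image,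
          Finset.card_image_of_injective _ (Fin.castSucc_injective n),
          List.countP_map]
        have hfin : (𝒟.filter (fun i => S (w i.castSucc) < S (w (Fin.last n)))).card
            = ((List.finRange n).filter (fun i => decide ((w i.castSucc).2 = y
                ∧ S (w i.castSucc) < S (w (Fin.last n))))).length := by
          rw [h𝒟def, Finset.filter_filter]
          rfl
        rw [hfin, hDLdef]
        rw [← List.countP_eq_length_filter, List.countP_filter]
        congr 1
        funext i
        rw [Bool.decide_and, Bool.and_comm]
        rfl
      show 1 + (((JD 𝒟).erase (Fin.last n)).filter
          (fun i => S (w i) < S (w (Fin.last n)))).card ≤ k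
      rw [hbridge]
      omega
    -- main measure bound
    have hmain : ((m:ℝ≥0∞) + 1)
        * P ({ω | Y (Fin.last n) ω = y ∧ (D y ω).length = m}
            ∩ {ω | Y (Fin.last n) ω ∈ C ω})
        ≤ (k:ℝ≥0∞) * P {ω | Y (Fin.last n) ω = y ∧ (D y ω).length = m} := by
      have hμcompl : μ Distᶜ = 0 := by
        rw [measure_compl hDistm (measure_ne_top _ _), hμDist]
        simp
      calc ((m:ℝ≥0∞) + 1) * P ({ω | Y (Fin.last n) ω = y ∧ (D y ω).length = m}
            ∩ {ω | Y (Fin.last n) ω ∈ C ω})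
          ≤ ((m:ℝ≥0∞) + 1) * μ (Bw ∩ Cov ∩ Dist) := by
            refine mul_le_mul_right ?_ _
            calc P ({ω | Y (Fin.last n) ω = y ∧ (D y ω).length = m}
                  ∩ {ω | Y (Fin.last n) ω ∈ C ω})
                ≤ P (Z ⁻¹' (Bw ∩ Cov)) := measure_mono hsub
              _ ≤ μ (Bw ∩ Cov) := Measure.le_map_apply hZ.aemeasurable _
              _ ≤ μ ((Bw ∩ Cov ∩ Dist) ∪ Distᶜ) := by
                  refine measure_mono (fun w hw => ?_)
                  by_cases hd : w ∈ Dist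
                  · exact Or.inl ⟨hw, hd⟩
                  · exact Or.inr hd
              _ ≤ μ (Bw ∩ Cov ∩ Dist) + μ Distᶜ := measure_union_le _ _
              _ = μ (Bw ∩ Cov ∩ Dist) := by rw [hμcompl, add_zero]
        _ ≤ ((m:ℝ≥0∞) + 1) * ∑ 𝒟 ∈ Finset.univ.powersetCard m, μ (AD 𝒟 ∩ CD 𝒟) := by
            refine mul_le_mul_right ?_ _
            exact le_trans (measure_mono hsub2) (measure_biUnion_finset_le _ _)
        _ = ∑ 𝒟 ∈ Finset.univ.powersetCard m, ((m:ℝ≥0∞) + 1) * μ (AD 𝒟 ∩ CD 𝒟) :=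
            Finset.mul_sum _ _ _
        _ ≤ ∑ 𝒟 ∈ Finset.univ.powersetCard m, (k:ℝ≥0∞) * μ (AD 𝒟) :=
            Finset.sum_le_sum hkey
        _ = (k:ℝ≥0∞) * μ (Bw ∩ Dist) := by rw [← Finset.mul_sum, hsum1]
        _ ≤ (k:ℝ≥0∞) * μ Bw := mul_le_mul_right (measure_mono Set.inter_subset_left) _
        _ = (k:ℝ≥0∞) * P {ω | Y (Fin.last n) ω = y ∧ (D y ω).length = m} := by
            rw [hPBμ]
    -- conclude
    have hfrac : (k:ℝ≥0∞) / ((m:ℝ≥0∞) + 1) ≤ ENNReal.ofReal (1 - α + 1 / (1 + (m:ℝ))) := by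
      have hkx : (k:ℝ) < (1 - α) * (1 + (m:ℝ)) + 1 := by
        have h1 : ((⌈(1 - α) * (1 + (m:ℝ))⌉ : ℤ) : ℝ) < (1 - α) * (1 + (m:ℝ)) + 1 :=
          Int.ceil_lt_add_one _
        have h2 : (k:ℝ) = ((⌈(1 - α) * (1 + (m:ℝ))⌉ : ℤ) : ℝ) := by
          rw [hkdef]
          exact_mod_cast Int.toNat_of_nonneg (le_of_lt hceil_pos)
        rw [h2]; exact h1
      have hreal : (k:ℝ) / ((m:ℝ) + 1) ≤ 1 - α + 1 / (1 + (m:ℝ)) := by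
        rw [div_le_iff₀ (by positivity)]
        nlinarith [hkx, hinv, hm1]
      calc (k:ℝ≥0∞) / ((m:ℝ≥0∞) + 1)
          = ENNReal.ofReal ((k:ℝ) / ((m:ℝ) + 1)) := by
            rw [ENNReal.ofReal_div_of_pos (by positivity)]
            congr 1
            · exact (ENNReal.ofReal_natCast k).symm
            · rw [ENNReal.ofReal_add (by positivity) (by norm_num)]
              simp [ENNReal.ofReal_natCast]
        _ ≤ ENNReal.ofReal (1 - α + 1 / (1 + (m:ℝ))) := ENNReal.ofReal_le_ofReal hreal
    rw [cond_apply hBm]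
    have h5 : P ({ω | Y (Fin.last n) ω = y ∧ (D y ω).length = m}
          ∩ {ω | Y (Fin.last n) ω ∈ C ω})
        ≤ P {ω | Y (Fin.last n) ω = y ∧ (D y ω).length = m}
          * ((k:ℝ≥0∞) / ((m:ℝ≥0∞) + 1)) := by
      have hrw : P {ω | Y (Fin.last n) ω = y ∧ (D y ω).length = m}
          * ((k:ℝ≥0∞) / ((m:ℝ≥0∞) + 1))
          = ((k:ℝ≥0∞) * P {ω | Y (Fin.last n) ω = y ∧ (D y ω).length = m})
            / ((m:ℝ≥0∞) + 1) := by
        rw [div_eq_mul_inv, div_eq_mul_inv]; ring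
      rw [hrw, ENNReal.le_div_iff_mul_le (Or.inl (by simp)) (Or.inl (by simp)), mul_comm]
      exact hmain
    calc (P {ω | Y (Fin.last n) ω = y ∧ (D y ω).length = m})⁻¹
          * P ({ω | Y (Fin.last n) ω = y ∧ (D y ω).length = m}
              ∩ {ω | Y (Fin.last n) ω ∈ C ω})
        ≤ (P {ω | Y (Fin.last n) ω = y ∧ (D y ω).length = m})⁻¹
          * (P {ω | Y (Fin.last n) ω = y ∧ (D y ω).length = m}
            * ((k:ℝ≥0∞) / ((m:ℝ≥0∞) + 1))) := mul_le_mul_right h5 _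
      _ = (k:ℝ≥0∞) / ((m:ℝ≥0∞) + 1) := by
          rw [← mul_assoc, ENNReal.inv_mul_cancel hPB (measure_ne_top _ _), one_mul]
      _ ≤ ENNReal.ofReal (1 - α + 1 / (1 + (m:ℝ))) := hfrac
end

section
/- Let S_1,…,S_{n+1} be exchangeable real-valued random variables and let k ∈ {1,…,n}. Let S_{(k)} denote the k-th smallest value among S_1,…,S_n. Then ℙ(S_{n+1} ≤ S_{(k)}) ≥ k/(n+1). -/
open MeasureTheory

lemma countP_ofFn' (n : ℕ) (p : ℝ → Bool) (v : Fin n → ℝ) :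
    (List.ofFn v).countP p = (Finset.univ.filter (fun i => p (v i))).card := by
  rw [Finset.card_filter]
  induction n with
  | zero => simp
  | succ m ih =>
      rw [Fin.sum_univ_succ, List.ofFn_succ, List.countP_cons, ih (fun i => v i.succ)]
      by_cases h : p (v 0) <;> simp [h] <;> ring

lemma le_kth_of_count_lt {n k : ℕ} (hk1 : 1 ≤ k) (hkn : k ≤ n) (v : Fin n → ℝ) (x : ℝ)
    (h : (Finset.univ.filter fun i => v i < x).card < k) : x ≤ kthSmallest v k := by
  by_contra hx
  push_neg at hx
  apply absurd h
  push_neg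
  set l := (List.ofFn v).mergeSort (fun a b => a ≤ b) with hl
  have hlen : l.length = n := by simp [hl, List.length_mergeSort]
  have hkl : k - 1 < l.length := by omega
  have hsorted : l.Pairwise (· ≤ ·) := by
    have := List.pairwise_mergeSort (le := fun a b : ℝ => decide (a ≤ b))
      (fun a b c => by simpa using le_trans) (fun a b => by simpa using le_total a b)
      (List.ofFn v)
    simpa [List.Pairwise, hl] using this
  have hq : kthSmallest v k = l.get ⟨k - 1, hkl⟩ := by
    rw [kthSmallest, ← hl, List.getD_eq_getElem]
    rfl
  have htake : ∀ a ∈ l.take k, a < x := by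
    intro a ha
    rw [List.mem_take_iff_getElem] at ha
    obtain ⟨i, hi, rfl⟩ := ha
    have hik : (⟨i, by omega⟩ : Fin l.length) ≤ ⟨k - 1, hkl⟩ := by
      simp only [Fin.mk_le_mk]; omega
    have := hsorted.rel_get_of_le hik
    calc l[i] = l.get ⟨i, by omega⟩ := rfl
    _ ≤ l.get ⟨k - 1, hkl⟩ := this
    _ < x := by rw [← hq]; exact hx
  have h1 : (l.take k).countP (fun a => decide (a < x)) = (l.take k).length :=
    List.countP_eq_length.mpr (fun a ha => by simpa using htake a ha)
  have h1' : (l.take k).length = k := by rw [List.length_take]; omega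
  have h2 : (l.take k).countP (fun a => decide (a < x)) ≤ l.countP (fun a => decide (a < x)) :=
    (List.take_sublist k l).countP_le
  have h3 : l.countP (fun a => decide (a < x)) = (List.ofFn v).countP (fun a => decide (a < x)) :=
    (List.mergeSort_perm (List.ofFn v) _).countP_eq _
  have h4 := countP_ofFn' n (fun a => decide (a < x)) v
  simp only [decide_eq_true_eq] at h4
  omega

lemma count_good_ge {m k : ℕ} (hk : k < m) (t : Fin m → ℝ) :
    k ≤ (Finset.univ.filter
      (fun j => (Finset.univ.filter (fun i => t i < t j)).card < k)).card := by
  by_contra hG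
  push_neg at hG
  set G := Finset.univ.filter
      (fun j => (Finset.univ.filter (fun i => t i < t j)).card < k) with hGdef
  set B := Finset.univ.filter
      (fun j => ¬ (Finset.univ.filter (fun i => t i < t j)).card < k) with hBdef
  have hpart : G.card + B.card = m := by
    rw [hGdef, hBdef, Finset.card_filter_add_card_filter_not]
    simp
  have hBne : B.Nonempty := by
    rw [← Finset.card_pos]; omega
  obtain ⟨j0, hj0B, hj0min⟩ := Finset.exists_min_image B t hBne
  have hsub : (Finset.univ.filter (fun i => t i < t j0)) ⊆ G := by
    intro i hi
    rw [Finset.mem_filter] at hi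
    by_contra hiG
    have hiB : i ∈ B := by
      rw [hBdef, Finset.mem_filter]
      rw [hGdef, Finset.mem_filter] at hiG
      simp only [Finset.mem_univ, true_and] at hiG ⊢
      exact hiG
    exact absurd (hj0min i hiB) (not_le.mpr hi.2)
  have h1 : (Finset.univ.filter (fun i => t i < t j0)).card ≤ G.card :=
    Finset.card_le_card hsub
  rw [hBdef, Finset.mem_filter] at hj0B
  omega

/-- **Quantile-inflation lemma (Lemma 2 of Romano et al.), lower bound.** -/
theorem exchangeable_quantile_inflation
    {Ω : Type*} [MeasurableSpace Ω] (P : Measure Ω) [IsProbabilityMeasure P]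
    (n : ℕ) (S : Fin (n + 1) → Ω → ℝ)
    (hmeas : ∀ i, Measurable (S i))
    (hexch : ∀ π : Equiv.Perm (Fin (n + 1)),
      Measure.map (fun ω => fun i => S (π i) ω) P
        = Measure.map (fun ω => fun i => S i ω) P)
    (k : ℕ) (hk1 : 1 ≤ k) (hkn : k ≤ n) :
    ENNReal.ofReal (k / (n + 1)) ≤
      P {ω | S (Fin.last n) ω ≤ kthSmallest (fun i : Fin n => S i.castSucc ω) k} := by
  classical
  set f : Ω → (Fin (n + 1) → ℝ) := fun ω i => S i ω with hf_def
  have hf : Measurable f := measurable_pi_lambda _ hmeas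
  set μ : Measure (Fin (n + 1) → ℝ) := Measure.map f P with hμ_def
  have hμprob : IsProbabilityMeasure μ := Measure.isProbabilityMeasure_map hf.aemeasurable
  set C : Fin (n + 1) → Set (Fin (n + 1) → ℝ) :=
    fun j => {t | (Finset.univ.filter (fun i => t i < t j)).card < k} with hC_def
  have hg : ∀ j, Measurable (fun t : Fin (n + 1) → ℝ =>
      (Finset.univ.filter (fun i => t i < t j)).card) := by
    intro j
    have : (fun t : Fin (n + 1) → ℝ => (Finset.univ.filter (fun i => t i < t j)).card)
        = fun t => ∑ i : Fin (n + 1), if t i < t j then 1 else 0 := by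
      funext t; rw [Finset.card_filter]
    rw [this]
    exact Finset.measurable_sum _ (fun i _ =>
      Measurable.ite (measurableSet_lt (measurable_pi_apply i) (measurable_pi_apply j))
        measurable_const measurable_const)
  have hC : ∀ j, MeasurableSet (C j) := by
    intro j
    have : C j = (fun t : Fin (n + 1) → ℝ =>
        (Finset.univ.filter (fun i => t i < t j)).card) ⁻¹' (Set.Iio k) := rfl
    rw [this]
    exact (hg j) measurableSet_Iio
  -- exchangeability: all C j have the same measure
  have hperm : ∀ (π : Equiv.Perm (Fin (n + 1))) (j : Fin (n + 1)), μ (C j) = μ (C (π j)) := by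
    intro π j
    set pπ : (Fin (n + 1) → ℝ) → (Fin (n + 1) → ℝ) := fun t i => t (π i) with hpπ_def
    have hpπ : Measurable pπ := measurable_pi_lambda _ (fun i => measurable_pi_apply (π i))
    have hmap : Measure.map pπ μ = μ := by
      rw [hμ_def, Measure.map_map hpπ hf]
      exact hexch π
    have hpre : pπ ⁻¹' (C j) = C (π j) := by
      ext t
      simp only [hC_def, hpπ_def, Set.mem_preimage, Set.mem_setOf_eq]
      have : (Finset.univ.filter (fun i => t (π i) < t (π j))).card
          = (Finset.univ.filter (fun i => t i < t (π j))).card := by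
        apply Finset.card_nbij' (fun i => π i) (fun i => π⁻¹ i) <;>
          simp [Finset.mem_filter, Set.MapsTo, Set.LeftInvOn, Set.RightInvOn]
      rw [this]
    calc μ (C j) = (Measure.map pπ μ) (C j) := by rw [hmap]
    _ = μ (pπ ⁻¹' (C j)) := Measure.map_apply hpπ (hC j)
    _ = μ (C (π j)) := by rw [hpre]
  have hsame : ∀ j, μ (C j) = μ (C (Fin.last n)) := by
    intro j
    have := hperm (Equiv.swap j (Fin.last n)) j
    rwa [Equiv.swap_apply_left] at this
  -- sum of measures is at least k
  have hsum : (k : ENNReal) ≤ ∑ j : Fin (n + 1), μ (C j) := by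
    have h1 : ∀ j, μ (C j) = ∫⁻ t, (C j).indicator (fun _ => (1 : ENNReal)) t ∂μ := by
      intro j
      rw [lintegral_indicator_const (hC j), one_mul]
    calc (k : ENNReal) = ∫⁻ _, (k : ENNReal) ∂μ := by simp
    _ ≤ ∫⁻ t, ∑ j : Fin (n + 1), (C j).indicator (fun _ => (1 : ENNReal)) t ∂μ := by
        apply lintegral_mono
        intro t
        have hcount := count_good_ge (by omega : k < n + 1) t
        have : ∑ j : Fin (n + 1), (C j).indicator (fun _ => (1 : ENNReal)) t
            = ((Finset.univ.filter (fun j => t ∈ C j)).card : ENNReal) := by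
          rw [Finset.card_filter]
          push_cast
          congr 1
          funext j
          by_cases h : t ∈ C j <;> simp [Set.indicator_apply, h]
        dsimp only
        rw [this]
        exact_mod_cast Nat.cast_le.mpr hcount
    _ = ∑ j : Fin (n + 1), ∫⁻ t, (C j).indicator (fun _ => (1 : ENNReal)) t ∂μ :=
        lintegral_finset_sum _ (fun j _ => (measurable_one.indicator (hC j)))
    _ = ∑ j : Fin (n + 1), μ (C j) := by
        exact Finset.sum_congr rfl (fun j _ => (h1 j).symm)
  have hsum2 : (k : ENNReal) ≤ (n + 1) * μ (C (Fin.last n)) := by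
    calc (k : ENNReal) ≤ ∑ j : Fin (n + 1), μ (C j) := hsum
    _ = ∑ _j : Fin (n + 1), μ (C (Fin.last n)) := Finset.sum_congr rfl (fun j _ => hsame j)
    _ = (n + 1) * μ (C (Fin.last n)) := by
        rw [Finset.sum_const, Finset.card_univ, Fintype.card_fin, nsmul_eq_mul]
        push_cast
        ring
  have hdiv : (k : ENNReal) / (n + 1) ≤ μ (C (Fin.last n)) := by
    rw [ENNReal.div_le_iff (by simp) (by simp)]
    rwa [mul_comm] at hsum2
  -- transport back
  have hsubset : f ⁻¹' (C (Fin.last n)) ⊆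
      {ω | S (Fin.last n) ω ≤ kthSmallest (fun i : Fin n => S i.castSucc ω) k} := by
    intro ω hω
    simp only [Set.mem_preimage, hC_def, Set.mem_setOf_eq, hf_def] at hω
    simp only [Set.mem_setOf_eq]
    apply le_kth_of_count_lt hk1 hkn
    have : (Finset.univ.filter (fun i : Fin n => S i.castSucc ω < S (Fin.last n) ω)).card
        ≤ (Finset.univ.filter (fun i : Fin (n + 1) => S i ω < S (Fin.last n) ω)).card := by
      rw [Finset.card_filter, Finset.card_filter, Fin.sum_univ_castSucc]
      simp
    omega
  have hfinal : μ (C (Fin.last n)) ≤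
      P {ω | S (Fin.last n) ω ≤ kthSmallest (fun i : Fin n => S i.castSucc ω) k} := by
    rw [hμ_def, Measure.map_apply hf (hC (Fin.last n))]
    exact measure_mono hsubset
  have hcast : ENNReal.ofReal ((k : ℝ) / (n + 1)) = (k : ENNReal) / (n + 1) := by
    rw [ENNReal.ofReal_div_of_pos (by positivity), ENNReal.ofReal_natCast,
      ENNReal.ofReal_add (by positivity) zero_le_one, ENNReal.ofReal_natCast,
      ENNReal.ofReal_one]
  rw [hcast]
  exact le_trans hdiv hfinal
end
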